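/- arXiv:1707.04229 — 6 statements merged into one kernel-verified Lean document; each statement's English description precedes it below -/
import Mathlib

section
/- There exist absolute constants c > 0 such that for every sufficiently large n, the 3-uniform Ramsey number of S_n satisfies r_3(S_n, S_n) ≤ r_3(S_{2^{cn}, n}, S_{2^{cn}, n}) < 2^{3n^2}. In particular, r_3(S_n, S_n) < 2^{3n^2} for all sufficiently large n. -/
open Filter Finset

/-- A monochromatic copy of `S_{a,b}` in color `col`: disjoint sets `U, V` with `|U| = a`,
`|V| = b`, such that every triple `{x,y,z}` with `x ∈ U` and `y, z ∈ V` distinct has color `col`. -/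
def hasSab {N : ℕ} (χ : Finset (Fin N) → Bool) (col : Bool) (a b : ℕ) : Prop :=
  ∃ U V : Finset (Fin N), Disjoint U V ∧ U.card = a ∧ V.card = b ∧
    ∀ x ∈ U, ∀ y ∈ V, ∀ z ∈ V, y ≠ z → χ {x, y, z} = col

/-- The Ramsey number `r_3(S_{a,b}, S_{a,b})`. -/
noncomputable def rS (a b : ℕ) : ℕ :=
  sInf {N | ∀ χ : Finset (Fin N) → Bool, hasSab χ true a b ∨ hasSab χ false a b}

/-- Erdős–Szekeres bound for graph Ramsey, for symmetric Bool colorings. -/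
lemma es_ramsey {α : Type*} [DecidableEq α] (g : α → α → Bool)
    (hsym : ∀ y z, g y z = g z y) (k : ℕ) :
    ∀ (p q : ℕ) (S : Finset α), p + q ≤ k → Nat.choose (p + q) p ≤ S.card →
    (∃ V ⊆ S, V.card = p ∧ ∀ y ∈ V, ∀ z ∈ V, y ≠ z → g y z = true) ∨
    (∃ V ⊆ S, V.card = q ∧ ∀ y ∈ V, ∀ z ∈ V, y ≠ z → g y z = false) := by
  induction k with
  | zero =>
    intro p q S hk _
    have hp : p = 0 := by omega
    subst hp
    exact Or.inl ⟨∅, empty_subset _, card_empty, by simp⟩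
  | succ k ih =>
    intro p q S hk hcard
    rcases Nat.eq_zero_or_pos p with hp | hp
    · subst hp
      exact Or.inl ⟨∅, empty_subset _, card_empty, by simp⟩
    rcases Nat.eq_zero_or_pos q with hq | hq
    · subst hq
      exact Or.inr ⟨∅, empty_subset _, card_empty, by simp⟩
    obtain ⟨p', rfl⟩ := Nat.exists_eq_succ_of_ne_zero (Nat.pos_iff_ne_zero.mp hp)
    obtain ⟨q', rfl⟩ := Nat.exists_eq_succ_of_ne_zero (Nat.pos_iff_ne_zero.mp hq)
    have hS : S.Nonempty := by
      have := Nat.choose_pos (show p' + 1 ≤ p' + 1 + (q' + 1) by omega)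
      exact card_pos.mp (lt_of_lt_of_le this hcard)
    obtain ⟨v, hv⟩ := hS
    set Tt : Finset α := (S.erase v).filter (fun w => g v w = true) with hTt
    set Tf : Finset α := (S.erase v).filter (fun w => ¬ (g v w = true)) with hTf
    have hsplit : Tt.card + Tf.card = S.card - 1 := by
      rw [hTt, hTf, Finset.card_filter_add_card_filter_not,
        card_erase_of_mem hv]
    have hpascal : Nat.choose (p' + 1 + (q' + 1)) (p' + 1)
        = Nat.choose (p' + (q' + 1)) p' + Nat.choose (p' + 1 + q') (p' + 1) := by
      have : p' + 1 + (q' + 1) = (p' + 1 + q') + 1 := by omega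
      rw [this, Nat.choose_succ_succ]
      congr 2
      omega
    by_cases hcase : Nat.choose (p' + (q' + 1)) p' ≤ Tt.card
    · rcases ih p' (q' + 1) Tt (by omega) hcase with ⟨V, hVs, hVc, hVcl⟩ | ⟨V, hVs, hVc, hVcl⟩
      · refine Or.inl ⟨insert v V, ?_, ?_, ?_⟩
        · refine insert_subset hv (hVs.trans ?_)
          exact (filter_subset _ _).trans (erase_subset _ _)
        · rw [card_insert_of_notMem, hVc]
          intro hvV
          exact (notMem_erase v S) (mem_of_mem_filter v (hVs hvV))
        · intro y hy z hz hyz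
          rcases mem_insert.mp hy with rfl | hy'
          · rcases mem_insert.mp hz with rfl | hz'
            · exact absurd rfl hyz
            · exact (mem_filter.mp (hVs hz')).2
          · rcases mem_insert.mp hz with rfl | hz'
            · rw [hsym]; exact (mem_filter.mp (hVs hy')).2
            · exact hVcl y hy' z hz' hyz
      · exact Or.inr ⟨V, hVs.trans ((filter_subset _ _).trans (erase_subset _ _)), hVc, hVcl⟩
    · have hTfcard : Nat.choose (p' + 1 + q') (p' + 1) ≤ Tf.card := by
        have h1 : Nat.choose (p' + 1 + (q' + 1)) (p' + 1) ≤ S.card := hcard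
        omega
      rcases ih (p' + 1) q' Tf (by omega) hTfcard with ⟨V, hVs, hVc, hVcl⟩ | ⟨V, hVs, hVc, hVcl⟩
      · exact Or.inl ⟨V, hVs.trans ((filter_subset _ _).trans (erase_subset _ _)), hVc, hVcl⟩
      · refine Or.inr ⟨insert v V, ?_, ?_, ?_⟩
        · refine insert_subset hv (hVs.trans ?_)
          exact (filter_subset _ _).trans (erase_subset _ _)
        · rw [card_insert_of_notMem, hVc]
          intro hvV
          exact (notMem_erase v S) (mem_of_mem_filter v (hVs hvV))
        · intro y hy z hz hyz
          rcases mem_insert.mp hy with rfl | hy'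
          · rcases mem_insert.mp hz with rfl | hz'
            · exact absurd rfl hyz
            · have := (mem_filter.mp (hVs hz')).2
              simpa using this
          · rcases mem_insert.mp hz with rfl | hz'
            · rw [hsym]
              have := (mem_filter.mp (hVs hy')).2
              simpa using this
            · exact hVcl y hy' z hz' hyz

/-- Weakening the `U`-side of a monochromatic star. -/
lemma hasSab_mono {N : ℕ} {χ : Finset (Fin N) → Bool} {col : Bool} {a b n : ℕ}
    (h : hasSab χ col a n) (hba : b ≤ a) : hasSab χ col b n := by
  obtain ⟨U, V, hd, hU, hV, hc⟩ := h
  obtain ⟨U', hU's, hU'c⟩ := Finset.exists_subset_card_eq (show b ≤ U.card by omega)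
  exact ⟨U', V, hd.mono_left hU's, hU'c, hV, fun x hx => hc x (hU's hx)⟩

lemma star_ramsey (n : ℕ) (hn : 3 ≤ n) :
    ∀ χ : Finset (Fin (2 ^ (3 * n ^ 2) - 1)) → Bool,
      hasSab χ true (2 ^ n) n ∨ hasSab χ false (2 ^ n) n := by
  intro χ
  classical
  let N' : ℕ := 2 ^ (3 * n ^ 2) - 1
  set m : ℕ := Nat.choose (n + n) n with hm
  -- numeric bounds
  have hm2 : m ≤ 2 ^ (n + n) := by
    have hsum := Nat.sum_range_choose (n + n)
    calc m ≤ ∑ i ∈ Finset.range (n + n + 1), Nat.choose (n + n) i :=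
          Finset.single_le_sum (fun i _ => Nat.zero_le _) (by simp)
      _ = 2 ^ (n + n) := hsum
  have hchoose_mn : Nat.choose m n ≤ 2 ^ (2 * n ^ 2) := by
    calc Nat.choose m n ≤ Nat.factorial n * Nat.choose m n :=
          Nat.le_mul_of_pos_left _ (Nat.factorial_pos n)
      _ = Nat.descFactorial m n := (Nat.descFactorial_eq_factorial_mul_choose m n).symm
      _ ≤ m ^ n := Nat.descFactorial_le_pow m n
      _ ≤ (2 ^ (n + n)) ^ n := Nat.pow_le_pow_left hm2 n
      _ = 2 ^ (2 * n ^ 2) := by rw [← pow_mul]; ring_nf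
  have hpow_big : 2 ^ (2 * n ^ 2) * 2 * (2 ^ n + n) + m + 2 ≤ 2 ^ (3 * n ^ 2) := by
    have h1 : 2 ^ n + n ≤ 2 ^ (n + 1) := by
      have : n < 2 ^ n := Nat.lt_two_pow_self (n := n)
      rw [pow_succ]; omega
    have h2 : 2 ^ (2 * n ^ 2) * 2 * (2 ^ n + n) ≤ 2 ^ (2 * n ^ 2 + n + 2) := by
      calc 2 ^ (2 * n ^ 2) * 2 * (2 ^ n + n) ≤ 2 ^ (2 * n ^ 2) * 2 * 2 ^ (n + 1) :=
            Nat.mul_le_mul_left _ h1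
        _ = 2 ^ (2 * n ^ 2 + n + 2) := by
            rw [show 2 * n ^ 2 + n + 2 = 2 * n ^ 2 + (n + 1) + 1 from by omega,
              pow_add, pow_add, pow_one]
            ring
    have h3 : m ≤ 2 ^ (2 * n ^ 2 + n + 2) := by
      refine hm2.trans (Nat.pow_le_pow_right (by norm_num) ?_)
      nlinarith
    have h4 : 2 ≤ 2 ^ (2 * n ^ 2 + n + 2) := by
      calc 2 = 2 ^ 1 := rfl
        _ ≤ _ := Nat.pow_le_pow_right (by norm_num) (by omega)
    have h5 : 2 ^ (2 * n ^ 2 + n + 2) * 4 ≤ 2 ^ (3 * n ^ 2) := by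
      have : 2 * n ^ 2 + n + 2 + 2 ≤ 3 * n ^ 2 := by nlinarith
      calc 2 ^ (2 * n ^ 2 + n + 2) * 4 = 2 ^ (2 * n ^ 2 + n + 2 + 2) := by
            rw [pow_add (2 : ℕ) (2 * n ^ 2 + n + 2) 2]; norm_num
        _ ≤ 2 ^ (3 * n ^ 2) := Nat.pow_le_pow_right (by norm_num) this
    omega
  have hmN : m ≤ N' := by
    have : 2 ^ (3 * n ^ 2) ≥ 1 := Nat.one_le_two_pow
    omega
  -- choose T
  obtain ⟨T, hTuniv, hTcard⟩ := Finset.exists_subset_card_eq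
    (show m ≤ (Finset.univ : Finset (Fin N')).card by simpa using hmN)
  -- Ramsey in each link
  have hramsey : ∀ x : Fin N', ∃ vc : Finset (Fin N') × Bool,
      vc.1 ⊆ T ∧ vc.1.card = n ∧
      ∀ y ∈ vc.1, ∀ z ∈ vc.1, y ≠ z → χ {x, y, z} = vc.2 := by
    intro x
    have hsym : ∀ y z : Fin N', χ {x, y, z} = χ {x, z, y} := by
      intro y z
      congr 1
      rw [Finset.pair_comm y z]
    rcases es_ramsey (fun y z => χ {x, y, z}) hsym (n + n) n n T le_rfl
        (by rw [hTcard]) with ⟨V, hVs, hVc, hVcl⟩ | ⟨V, hVs, hVc, hVcl⟩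
    · exact ⟨(V, true), hVs, hVc, hVcl⟩
    · exact ⟨(V, false), hVs, hVc, hVcl⟩
  set f : Fin N' → Finset (Fin N') × Bool := fun x => (hramsey x).choose with hf
  have hfspec : ∀ x : Fin N', (f x).1 ⊆ T ∧ (f x).1.card = n ∧
      ∀ y ∈ (f x).1, ∀ z ∈ (f x).1, y ≠ z → χ {x, y, z} = (f x).2 :=
    fun x => (hramsey x).choose_spec
  -- pigeonhole
  set s : Finset (Fin N') := Finset.univ \ T with hs
  set t : Finset (Finset (Fin N') × Bool) := T.powersetCard n ×ˢ (Finset.univ : Finset Bool)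
    with ht
  have hmaps : ∀ x ∈ s, f x ∈ t := by
    intro x _
    rw [ht, Finset.mem_product, Finset.mem_powersetCard]
    exact ⟨⟨(hfspec x).1, (hfspec x).2.1⟩, Finset.mem_univ _⟩
  have htcard : t.card = Nat.choose m n * 2 := by
    rw [ht, Finset.card_product, Finset.card_powersetCard, hTcard]
    simp
  have hscard : s.card = N' - m := by
    rw [hs, Finset.card_sdiff_of_subset hTuniv, hTcard, Finset.card_univ, Fintype.card_fin]
  have hineq : t.card * (2 ^ n + n) < s.card := by
    rw [htcard, hscard]
    have : Nat.choose m n * 2 * (2 ^ n + n) ≤ 2 ^ (2 * n ^ 2) * 2 * (2 ^ n + n) := by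
      exact Nat.mul_le_mul_right _ (Nat.mul_le_mul_right _ hchoose_mn)
    have hP : 1 ≤ 2 ^ (3 * n ^ 2) := Nat.one_le_two_pow
    omega
  obtain ⟨y₀, hy₀t, hfib⟩ :=
    Finset.exists_lt_card_fiber_of_mul_lt_card_of_maps_to hmaps hineq
  set F : Finset (Fin N') := s.filter (fun x => f x = y₀) with hF
  have hy₀ : y₀.1 ⊆ T ∧ y₀.1.card = n := by
    rw [ht, Finset.mem_product, Finset.mem_powersetCard] at hy₀t
    exact hy₀t.1
  -- build U
  obtain ⟨U, hUF, hUcard⟩ := Finset.exists_subset_card_eq (show 2 ^ n ≤ F.card by omega)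
  have hcol : hasSab χ y₀.2 (2 ^ n) n := by
    refine ⟨U, y₀.1, ?_, hUcard, hy₀.2, ?_⟩
    · refine Finset.disjoint_left.mpr ?_
      intro x hxU hxV
      have hxF : x ∈ F := hUF hxU
      have hxs : x ∈ s := Finset.mem_of_mem_filter x hxF
      rw [hs, Finset.mem_sdiff] at hxs
      exact hxs.2 (hy₀.1 hxV)
    · intro x hxU y hy z hz hyz
      have hxF : x ∈ F := hUF hxU
      have hfx : f x = y₀ := (Finset.mem_filter.mp hxF).2
      have := (hfspec x).2.2
      rw [hfx] at this
      exact this y hy z hz hyz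
  cases hcol' : y₀.2 with
  | true => left; rwa [hcol'] at hcol
  | false => right; rwa [hcol'] at hcol

theorem stmt_0 :
    ∃ c : ℝ, 0 < c ∧ ∀ᶠ n : ℕ in atTop,
      rS n n ≤ rS (⌊(2:ℝ) ^ (c * n)⌋₊) n ∧
      rS (⌊(2:ℝ) ^ (c * n)⌋₊) n < 2 ^ (3 * n ^ 2) := by
  refine ⟨1, one_pos, ?_⟩
  filter_upwards [eventually_ge_atTop 3] with n hn
  have hA : ⌊(2:ℝ) ^ ((1:ℝ) * (n:ℝ))⌋₊ = 2 ^ n := by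
    rw [one_mul, Real.rpow_natCast]
    rw [show ((2:ℝ)) ^ n = ((2 ^ n : ℕ) : ℝ) by push_cast; ring, Nat.floor_natCast]
  rw [hA]
  have key : (2 ^ (3 * n ^ 2) - 1) ∈
      {N | ∀ χ : Finset (Fin N) → Bool, hasSab χ true (2 ^ n) n ∨ hasSab χ false (2 ^ n) n} :=
    star_ramsey n hn
  have hne : {N | ∀ χ : Finset (Fin N) → Bool,
      hasSab χ true (2 ^ n) n ∨ hasSab χ false (2 ^ n) n}.Nonempty := ⟨_, key⟩
  constructor
  · have hsub : {N | ∀ χ : Finset (Fin N) → Bool,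
        hasSab χ true (2 ^ n) n ∨ hasSab χ false (2 ^ n) n} ⊆
        {N | ∀ χ : Finset (Fin N) → Bool, hasSab χ true n n ∨ hasSab χ false n n} := by
      intro N hN χ
      rcases hN χ with h | h
      · exact Or.inl (hasSab_mono h (Nat.lt_two_pow_self (n := n)).le)
      · exact Or.inr (hasSab_mono h (Nat.lt_two_pow_self (n := n)).le)
    exact Nat.sInf_le (hsub (Nat.sInf_mem hne))
  · have h1 : rS (2 ^ n) n ≤ 2 ^ (3 * n ^ 2) - 1 := Nat.sInf_le key
    have h2 : 1 ≤ 2 ^ (3 * n ^ 2) := Nat.one_le_two_pow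
    omega
end

section
/- For every n ≥ 1, r_3(S_{1,n}, S_{1,n}) ≤ 1 + r_2(n,n), and consequently r_3(S_{1,n}, S_{1,n}) < 4^n. -/
/-- A monochromatic clique of size `n` in color `c` for a coloring of `k`-subsets. -/
def monoClique (k : ℕ) {N : ℕ} (χ : Finset (Fin N) → Bool) (c : Bool) (n : ℕ) : Prop :=
  ∃ S : Finset (Fin N), S.card = n ∧ ∀ e : Finset (Fin N), e ⊆ S → e.card = k → χ e = c


lemma exists_goodSeq {N : ℕ} (χ : Finset (Fin N) → Bool) :
    ∀ (m : ℕ) (A : Finset (Fin N)), 2 ^ m ≤ A.card →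
    ∃ l : List (Fin N × Bool), l.length = m + 1 ∧ (l.map Prod.fst).Nodup ∧
      (∀ p ∈ l, p.1 ∈ A) ∧ l.Pairwise (fun p q => χ {p.1, q.1} = p.2) := by
  intro m
  induction m with
  | zero =>
    intro A hA
    obtain ⟨v, hv⟩ := Finset.card_pos.mp (by simpa using hA)
    exact ⟨[(v, true)], by simp, by simp, by simp [hv], by simp⟩
  | succ m ih =>
    intro A hA
    have hA1 : 0 < A.card := lt_of_lt_of_le (by positivity) hA
    obtain ⟨v, hv⟩ := Finset.card_pos.mp hA1
    have hsum := Finset.card_filter_add_card_filter_not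
      (s := A.erase v) (p := fun u => χ {v, u} = true)
    have hcard : (A.erase v).card = A.card - 1 := Finset.card_erase_of_mem hv
    have key : ∃ c : Bool, 2 ^ m ≤ ((A.erase v).filter (fun u => χ {v, u} = c)).card := by
      by_cases h : 2 ^ m ≤ ((A.erase v).filter (fun u => χ {v, u} = true)).card
      · exact ⟨true, h⟩
      · refine ⟨false, ?_⟩
        have : ((A.erase v).filter (fun u => ¬ (χ {v, u} = true)))
            = (A.erase v).filter (fun u => χ {v, u} = false) := by
          apply Finset.filter_congr; intro u _; simp
        rw [this] at hsum
        have h2 : 2 ^ (m + 1) = 2 ^ m + 2 ^ m := by ring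
        omega
    obtain ⟨c, hc⟩ := key
    obtain ⟨l, hlen, hnd, hmem, hpw⟩ := ih _ hc
    refine ⟨(v, c) :: l, by simp [hlen], ?_, ?_, ?_⟩
    · simp only [List.map_cons, List.nodup_cons]
      refine ⟨?_, hnd⟩
      intro hvl
      obtain ⟨p, hp, hp1⟩ := List.mem_map.mp hvl
      have := hmem p hp
      rw [hp1] at this
      exact (Finset.mem_erase.mp (Finset.mem_filter.mp this).1).1 rfl
    · intro p hp
      rcases List.mem_cons.mp hp with h | h
      · simp [h, hv]
      · exact Finset.mem_of_mem_erase (Finset.mem_filter.mp (hmem p h)).1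
    · refine List.pairwise_cons.mpr ⟨?_, hpw⟩
      intro q hq
      exact (Finset.mem_filter.mp (hmem q hq)).2

lemma mono_of_pow {N n : ℕ} (hn : 1 ≤ n) (hN : 2 ^ (2 * n - 2) ≤ N)
    (χ : Finset (Fin N) → Bool) :
    monoClique 2 χ true n ∨ monoClique 2 χ false n := by
  obtain ⟨l, hlen, hnd, -, hpw⟩ := exists_goodSeq χ (2 * n - 2) Finset.univ
    (by simpa using hN)
  have hcount : l.countP (fun p => p.2 = true) + l.countP (fun p => p.2 = false)
      = l.length := by
    clear hpw hnd hlen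
    induction l with
    | nil => simp
    | cons p t iht =>
      cases hp : p.2 <;> simp [List.countP_cons, hp] at iht ⊢ <;> omega
  have key : ∃ c : Bool, n ≤ l.countP (fun p => p.2 = c) := by
    by_cases h : n ≤ l.countP (fun p => p.2 = true)
    · exact ⟨true, h⟩
    · exact ⟨false, by omega⟩
  obtain ⟨c, hc⟩ := key
  set l' := (l.filter (fun p => p.2 = c)).take n with hl'
  have hsub : l'.Sublist l := (List.take_sublist _ _).trans List.filter_sublist
  have hlen' : l'.length = n := by
    rw [hl', List.length_take, ← List.countP_eq_length_filter]
    omega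
  have hnd' : (l'.map Prod.fst).Nodup := (hnd.sublist (hsub.map Prod.fst))
  have hallc : ∀ p ∈ l', p.2 = c := by
    intro p hp
    have := List.mem_of_mem_take hp
    simpa using (List.mem_filter.mp this).2
  have hpw' : (l'.map Prod.fst).Pairwise (fun a b => χ {a, b} = c) := by
    rw [List.pairwise_map]
    refine (hpw.sublist hsub).imp_of_mem ?_
    intro p q hp hq h
    rw [← hallc p hp]; exact h
  have hsymm : ∀ {a b : Fin N}, a ∈ l'.map Prod.fst → b ∈ l'.map Prod.fst → a ≠ b →
      χ {a, b} = c := by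
    intro a b ha hb hab
    haveI : Std.Symm (fun a b : Fin N => χ {a, b} = c) := ⟨fun x y h => by rwa [Finset.pair_comm] at h⟩
    exact hpw'.forall ha hb hab
  have hmono : monoClique 2 χ c n := by
    refine ⟨(l'.map Prod.fst).toFinset, ?_, ?_⟩
    · rw [List.toFinset_card_of_nodup hnd']
      simp [hlen']
    · intro e he hcard2
      obtain ⟨x, y, hxy, rfl⟩ := Finset.card_eq_two.mp hcard2
      have hx : x ∈ l'.map Prod.fst := by
        have := he (Finset.mem_insert_self _ _); simpa using this
      have hy : y ∈ l'.map Prod.fst := by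
        have := he (Finset.mem_insert_of_mem (Finset.mem_singleton_self _)); simpa using this
      exact hsymm hx hy hxy
  cases c
  · exact Or.inr hmono
  · exact Or.inl hmono

/-- The classical Ramsey number `r_k(s, n)`. -/
noncomputable def ramsey (k s n : ℕ) : ℕ :=
  sInf {N | ∀ χ : Finset (Fin N) → Bool, monoClique k χ true s ∨ monoClique k χ false n}

lemma ramsey_mem {n : ℕ} (hn : 1 ≤ n) :
    4 ^ (n - 1) ∈ {N | ∀ χ : Finset (Fin N) → Bool,
      monoClique 2 χ true n ∨ monoClique 2 χ false n} := by
  intro χ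
  refine mono_of_pow hn ?_ χ
  have : 2 ^ (2 * n - 2) = 4 ^ (n - 1) := by
    rw [show (4 : ℕ) = 2 ^ 2 from rfl, ← pow_mul]
    congr 1
    omega
  omega

lemma reduction {R n : ℕ}
    (hR : ∀ χ : Finset (Fin R) → Bool, monoClique 2 χ true n ∨ monoClique 2 χ false n) :
    (1 + R) ∈ {N | ∀ χ : Finset (Fin N) → Bool, hasSab χ true 1 n ∨ hasSab χ false 1 n} := by
  intro χ
  have hle : R ≤ 1 + R := by omega
  set ι : Fin R ↪ Fin (1 + R) := Fin.castLEEmb hle with hι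
  set x : Fin (1 + R) := ⟨R, by omega⟩ with hx
  have hιx : ∀ i : Fin R, ι i ≠ x := by
    intro i h
    have : (ι i : ℕ) = R := congrArg Fin.val h
    simp [hι, Fin.castLEEmb] at this
    omega
  set χ₂ : Finset (Fin R) → Bool := fun e => χ (insert x (e.map ι)) with hχ₂
  have key : ∀ c : Bool, monoClique 2 χ₂ c n → hasSab χ c 1 n := by
    rintro c ⟨S, hScard, hS⟩
    refine ⟨{x}, S.map ι, ?_, by simp, by simp [hScard], ?_⟩
    · simp only [Finset.disjoint_singleton_left, Finset.mem_map]
      rintro ⟨i, -, hi⟩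
      exact hιx i hi
    · intro a ha y hy z hz hyz
      rw [Finset.mem_singleton] at ha
      subst ha
      obtain ⟨y', hy', rfl⟩ := Finset.mem_map.mp hy
      obtain ⟨z', hz', rfl⟩ := Finset.mem_map.mp hz
      have hy'z' : y' ≠ z' := fun h => hyz (by rw [h])
      have := hS {y', z'} (by
        intro w hw
        rcases Finset.mem_insert.mp hw with h | h
        · rwa [h]
        · rw [Finset.mem_singleton.mp h]; exact hz')
        (Finset.card_pair hy'z')
      rw [hχ₂] at this
      simp only at this
      rw [Finset.map_insert, Finset.map_singleton] at this
      exact this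
  rcases hR χ₂ with h | h
  · exact Or.inl (key true h)
  · exact Or.inr (key false h)

theorem stmt_1 : ∀ n : ℕ, 1 ≤ n →
    rS 1 n ≤ 1 + ramsey 2 n n ∧ rS 1 n < 4 ^ n := by
  intro n hn
  have hne : {N | ∀ χ : Finset (Fin N) → Bool,
      monoClique 2 χ true n ∨ monoClique 2 χ false n}.Nonempty :=
    ⟨4 ^ (n - 1), ramsey_mem hn⟩
  have hmem : ramsey 2 n n ∈ {N | ∀ χ : Finset (Fin N) → Bool,
      monoClique 2 χ true n ∨ monoClique 2 χ false n} := Nat.sInf_mem hne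
  have hR4 : ramsey 2 n n ≤ 4 ^ (n - 1) := Nat.sInf_le (ramsey_mem hn)
  have h1 : rS 1 n ≤ 1 + ramsey 2 n n := Nat.sInf_le (reduction hmem)
  refine ⟨h1, lt_of_le_of_lt h1 ?_⟩
  have h4 : 4 ^ n = 4 * 4 ^ (n - 1) := by
    rw [← pow_succ']
    congr 1
    omega
  have : 1 ≤ 4 ^ (n - 1) := Nat.one_le_pow _ _ (by norm_num)
  omega
end

section
/- Let k ≥ 2 and s ≥ k + 1, and set q = s − k + 1. Then for every n, r_{k−1}(⌊n/q⌋; q) ≤ r̄_k(P_s, n) ≤ r_{k−1}(n; q). -/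
set_option linter.unusedSectionVars false
set_option linter.unusedVariables false

/-- A monochromatic clique of size `n` in color `c` for a `q`-coloring of `k`-subsets. -/
def monoCliqueC (k : ℕ) {N q : ℕ} (χ : Finset (Fin N) → Fin q) (c : Fin q) (n : ℕ) : Prop :=
  ∃ S : Finset (Fin N), S.card = n ∧ ∀ e : Finset (Fin N), e ⊆ S → e.card = k → χ e = c

/-- The multicolor Ramsey number `r_k(n; q)`. -/
noncomputable def ramseyMulti (k n q : ℕ) : ℕ :=
  sInf {N | ∀ χ : Finset (Fin N) → Fin q, ∃ c : Fin q, monoCliqueC k χ c n}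

/-- An ordered (monotone) copy of the tight path `P_s^{(k)}` in color `col`: a set `S` of
`s` vertices such that every window of `k` consecutive vertices (in increasing order)
forms an edge of color `col`. -/
def hasTightPath (k s : ℕ) {N : ℕ} (χ : Finset (Fin N) → Bool) (col : Bool) : Prop :=
  ∃ S : Finset (Fin N), S.card = s ∧
    ∀ i : ℕ, i + k ≤ s → χ ((((S.sort (· ≤ ·)).drop i).take k).toFinset) = col

/-- The ordered Ramsey number `r̄_k(P_s, n)` of the tight path versus a clique. -/
noncomputable def rbar (k s n : ℕ) : ℕ :=
  sInf {N | ∀ χ : Finset (Fin N) → Bool, hasTightPath k s χ true ∨ monoClique k χ false n}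

open Finset

/-- Pigeonhole: some color class has `q * |fiber| ≥ |X|`. -/
lemma pigeon {q : ℕ} (hq : 0 < q) (X : Finset ℕ) (f : ℕ → Fin q) :
    ∃ c : Fin q, X.card ≤ q * (X.filter (fun x => f x = c)).card := by
  have hne : (Finset.univ : Finset (Fin q)).Nonempty := by
    simpa [Finset.univ_nonempty_iff] using Fin.pos_iff_nonempty.mp hq
  obtain ⟨c, -, hc⟩ := Finset.exists_max_image (Finset.univ : Finset (Fin q))
    (fun c => (X.filter (fun x => f x = c)).card) hne
  refine ⟨c, ?_⟩
  have h1 : X.card = ∑ c : Fin q, (X.filter (fun x => f x = c)).card :=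
    Finset.card_eq_sum_card_fiberwise (fun x _ => Finset.mem_univ (f x))
  have h2 : ∑ c' : Fin q, (X.filter (fun x => f x = c')).card
      ≤ (Finset.univ : Finset (Fin q)).card • (X.filter (fun x => f x = c)).card :=
    Finset.sum_le_card_nsmul _ _ _ (fun c' _ => hc c' (Finset.mem_univ c'))
  simpa [h1, Finset.card_univ, smul_eq_mul] using h2

/-- Shrink a set so that a family of extensions is monochromatic on it. -/
lemma shrink {q : ℕ} (hq : 0 < q) (χ : Finset ℕ → Fin q) (Es : Finset (Finset ℕ)) (X : Finset ℕ) :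
    ∃ X' : Finset ℕ, X' ⊆ X ∧
      (∀ e ∈ Es, ∀ x ∈ X', ∀ y ∈ X', χ (insert x e) = χ (insert y e)) ∧
      X.card ≤ q ^ Es.card * X'.card := by
  induction Es using Finset.induction_on generalizing X with
  | empty => exact ⟨X, Finset.Subset.refl X, by simp, by simp⟩
  | @insert e Es he ih =>
    obtain ⟨X₁, hX₁sub, hX₁const, hX₁card⟩ := ih X
    obtain ⟨c, hc⟩ := pigeon hq X₁ (fun x => χ (insert x e))
    refine ⟨X₁.filter (fun x => χ (insert x e) = c), ?_, ?_, ?_⟩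
    · exact (Finset.filter_subset _ _).trans hX₁sub
    · intro e' he' x hx y hy
      rcases Finset.mem_insert.mp he' with rfl | he'
      · have hx' := (Finset.mem_filter.mp hx).2
        have hy' := (Finset.mem_filter.mp hy).2
        rw [hx', hy']
      · exact hX₁const e' he' x (Finset.filter_subset _ _ hx) y (Finset.filter_subset _ _ hy)
    · rw [Finset.card_insert_of_notMem he, pow_succ]
      calc X.card ≤ q ^ Es.card * X₁.card := hX₁card
        _ ≤ q ^ Es.card * (q * (X₁.filter (fun x => χ (insert x e) = c)).card) :=
            Nat.mul_le_mul_left _ hc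
        _ = q ^ Es.card * q * (X₁.filter (fun x => χ (insert x e) = c)).card := by ring

/-- The cardinality budget for the greedy construction. -/
def Gbud (q : ℕ) : ℕ → ℕ → ℕ
  | _, 0 => 1
  | a, t + 1 => q ^ 2 ^ a * (Gbud q (a + 1) t + 1)

lemma greedy {q K : ℕ} (hq : 0 < q) (χ : Finset ℕ → Fin q) (V : Finset ℕ) :
    ∀ (t : ℕ) (as : List ℕ) (X : Finset ℕ),
      as.Nodup → (∀ a ∈ as, a ∈ V) → X ⊆ V → (∀ a ∈ as, a ∉ X) →
      (∀ (j : ℕ) (hj : j < as.length), ∀ e ⊆ (as.drop (j+1)).toFinset, e.card = K →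
        ∀ y ∈ X, χ (insert (as.get ⟨j, hj⟩) e) = χ (insert y e)) →
      Gbud q as.length t ≤ X.card →
      ∃ (as' : List ℕ) (X' : Finset ℕ),
        as'.length = as.length + t ∧ as'.Nodup ∧ (∀ a ∈ as', a ∈ V) ∧ X'.Nonempty ∧
        (∀ (j : ℕ) (hj : j < as'.length), ∀ e ⊆ (as'.drop (j+1)).toFinset, e.card = K →
          ∀ y ∈ X', χ (insert (as'.get ⟨j, hj⟩) e) = χ (insert y e)) := by
  intro t
  induction t with
  | zero =>
    intro as X h1 h2 h3 h4 h5 h6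
    exact ⟨as, X, by simp, h1, h2, Finset.card_pos.mp (by simpa [Gbud] using h6), h5⟩
  | succ t ih =>
    intro as X h1 h2 h3 h4 h5 h6
    obtain ⟨X₁, hX₁sub, hX₁const, hX₁card⟩ :=
      shrink hq χ (as.toFinset.powersetCard K) X
    have hEs : (as.toFinset.powersetCard K).card ≤ 2 ^ as.length := by
      calc (as.toFinset.powersetCard K).card ≤ as.toFinset.powerset.card :=
            Finset.card_le_card
              (by rw [Finset.powersetCard_eq_filter]; exact Finset.filter_subset _ _)
        _ = 2 ^ as.toFinset.card := Finset.card_powerset _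
        _ ≤ 2 ^ as.length := Nat.pow_le_pow_right (by norm_num) as.toFinset_card_le
    have hpos : 0 < q ^ 2 ^ as.length := Nat.pow_pos hq
    have hX₁card' : Gbud q (as.length + 1) t + 1 ≤ X₁.card := by
      have h7 : q ^ 2 ^ as.length * (Gbud q (as.length + 1) t + 1) ≤
          q ^ 2 ^ as.length * X₁.card := by
        calc q ^ 2 ^ as.length * (Gbud q (as.length + 1) t + 1) = Gbud q as.length (t+1) := rfl
          _ ≤ X.card := h6
          _ ≤ q ^ (as.toFinset.powersetCard K).card * X₁.card := hX₁card
          _ ≤ q ^ 2 ^ as.length * X₁.card :=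
              Nat.mul_le_mul_right _ (Nat.pow_le_pow_right hq hEs)
      exact Nat.le_of_mul_le_mul_left h7 hpos
    obtain ⟨a, ha⟩ : X₁.Nonempty := Finset.card_pos.mp (by omega)
    have haX : a ∈ X := hX₁sub ha
    have hanotas : a ∉ as := fun h => h4 a h haX
    have hres := ih (a :: as) (X₁.erase a) (List.nodup_cons.mpr ⟨hanotas, h1⟩)
      (by intro x hx
          rcases List.mem_cons.mp hx with rfl | hx
          · exact h3 haX
          · exact h2 x hx)
      ((Finset.erase_subset _ _).trans (hX₁sub.trans h3))
      (by intro x hx hmem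
          rcases List.mem_cons.mp hx with rfl | hx
          · exact (Finset.notMem_erase x X₁) hmem
          · exact (h4 x hx (hX₁sub ((Finset.erase_subset _ _) hmem))).elim)
      (by intro j hj e hesub hecard y hy
          match j with
          | 0 =>
            have hmem : e ∈ as.toFinset.powersetCard K := by
              rw [Finset.mem_powersetCard]
              exact ⟨by simpa using hesub, hecard⟩
            exact hX₁const e hmem a ha y ((Finset.erase_subset _ _) hy)
          | j + 1 =>
            have hj' : j < as.length := by simpa using hj
            exact h5 j hj' e (by simpa using hesub) hecard y (hX₁sub ((Finset.erase_subset _ _) hy)))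
      (by
        have : X₁.card - 1 ≤ (X₁.erase a).card := by
          rw [Finset.card_erase_of_mem ha]
        simp only [List.length_cons]
        omega)
    obtain ⟨as', X', hlen, hnd, hV, hne, hinv⟩ := hres
    exact ⟨as', X', by simp at hlen ⊢; omega, hnd, hV, hne, hinv⟩

lemma ramseyNat {q : ℕ} (hq : 0 < q) :
    ∀ K n : ℕ, ∃ N : ℕ, ∀ V : Finset ℕ, N ≤ V.card →
      ∀ χ : Finset ℕ → Fin q, ∃ (c : Fin q) (S : Finset ℕ),
        S ⊆ V ∧ S.card = n ∧ ∀ e ⊆ S, e.card = K → χ e = c := by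
  intro K
  induction K with
  | zero =>
    intro n
    refine ⟨n, fun V hV χ => ?_⟩
    obtain ⟨S, hS, hcard⟩ := Finset.exists_subset_card_eq hV
    refine ⟨χ ∅, S, hS, hcard, fun e he hce => ?_⟩
    rw [Finset.card_eq_zero.mp hce]
  | succ K ih =>
    intro n
    obtain ⟨T, hT⟩ := ih n
    refine ⟨Gbud q 0 T, fun V hV χ => ?_⟩
    obtain ⟨as, X, hlen, hnd, hVmem, ⟨b, hb⟩, hinv⟩ :=
      greedy (K := K) hq χ V T ([] : List ℕ) V List.nodup_nil (by simp) (Finset.Subset.refl V)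
        (by simp) (by simp) (by simpa using hV)
    simp only [List.length_nil, Nat.zero_add] at hlen
    have hascard : as.toFinset.card = T := by
      rw [List.toFinset_card_of_nodup hnd, hlen]
    obtain ⟨c, S, hSsub, hScard, hSmono⟩ := hT as.toFinset (le_of_eq hascard.symm)
      (fun e => χ (insert b e))
    refine ⟨c, S, fun x hx => hVmem x (List.mem_toFinset.mp (hSsub hx)), hScard, ?_⟩
    intro e' he' hce'
    have hene : e'.Nonempty := Finset.card_pos.mp (by omega)
    obtain ⟨a, hamem, hamin⟩ := Finset.exists_min_image e' (fun x => as.idxOf x) hene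
    have haas : a ∈ as := List.mem_toFinset.mp (hSsub (he' hamem))
    have hjlt : as.idxOf a < as.length := List.idxOf_lt_length_iff.mpr haas
    have hgeta : as.get ⟨as.idxOf a, hjlt⟩ = a := List.idxOf_get hjlt
    have herase : e'.erase a ⊆ (as.drop (as.idxOf a + 1)).toFinset := by
      intro x hx
      have hxe' : x ∈ e' := Finset.mem_of_mem_erase hx
      have hxa : x ≠ a := Finset.ne_of_mem_erase hx
      have hxas : x ∈ as := List.mem_toFinset.mp (hSsub (he' hxe'))
      have hxlt : as.idxOf x < as.length := List.idxOf_lt_length_iff.mpr hxas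
      have hgt : as.idxOf a < as.idxOf x := by
        rcases lt_or_eq_of_le (hamin x hxe') with h | h
        · exact h
        · exact absurd ((List.idxOf_inj hxas).mp h.symm) hxa
      rw [List.mem_toFinset]
      have hi2 : as.idxOf x - (as.idxOf a + 1) < (as.drop (as.idxOf a + 1)).length := by
        rw [List.length_drop]; omega
      have key : as.idxOf a + 1 + (as.idxOf x - (as.idxOf a + 1)) = as.idxOf x := by
        omega
      have hget : (as.drop (as.idxOf a + 1))[as.idxOf x - (as.idxOf a + 1)]'hi2 = x := by
        rw [List.getElem_drop]
        simp_rw [key]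
        exact List.getElem_idxOf hxlt
      exact hget ▸ List.getElem_mem hi2
    have hcardK : (e'.erase a).card = K := by
      rw [Finset.card_erase_of_mem hamem, hce']
      omega

    have hkey := hinv (as.idxOf a) hjlt (e'.erase a) herase hcardK b hb
    rw [hgeta, Finset.insert_erase hamem] at hkey
    rw [hkey]
    exact hSmono (e'.erase a) ((Finset.erase_subset _ _).trans he') hcardK

lemma ramseyFin (K q n : ℕ) (hq : 0 < q) :
    ∃ N : ℕ, ∀ χ : Finset (Fin N) → Fin q, ∃ c : Fin q,
      ∃ S : Finset (Fin N), S.card = n ∧ ∀ e : Finset (Fin N), e ⊆ S → e.card = K → χ e = c := by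
  obtain ⟨N, hN⟩ := ramseyNat hq K n
  refine ⟨N, fun χ' => ?_⟩
  have hlt : ∀ e : Finset ℕ, ∀ m ∈ e.filter (· < N), m < N := fun e m hm =>
    (Finset.mem_filter.mp hm).2
  set χ : Finset ℕ → Fin q := fun e => χ' ((e.filter (· < N)).attachFin (hlt e)) with hχ
  obtain ⟨c, S, hSsub, hScard, hSmono⟩ := hN (Finset.range N) (by simp) χ
  have hSlt : ∀ m ∈ S, m < N := fun m hm => Finset.mem_range.mp (hSsub hm)
  refine ⟨c, S.attachFin hSlt, by rw [Finset.card_attachFin, hScard], ?_⟩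
  intro e' he' hce'
  have heval : (e'.image Fin.val) ⊆ S := by
    intro x hx
    obtain ⟨y, hy, rfl⟩ := Finset.mem_image.mp hx
    exact Finset.mem_attachFin _ |>.mp (he' hy)
  have hecard : (e'.image Fin.val).card = K := by
    rw [Finset.card_image_of_injective _ Fin.val_injective, hce']
  have := hSmono (e'.image Fin.val) heval hecard
  rw [hχ] at this
  have heq : (((e'.image Fin.val).filter (· < N)).attachFin (hlt _)) = e' := by
    ext x
    rw [Finset.mem_attachFin, Finset.mem_filter]
    constructor
    · rintro ⟨hx, -⟩
      obtain ⟨y, hy, hyx⟩ := Finset.mem_image.mp hx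
      rwa [Fin.val_injective hyx] at hy
    · intro hx
      exact ⟨Finset.mem_image.mpr ⟨x, hx, rfl⟩, x.isLt⟩
  simp only at this
  rwa [heq] at this

section helpers

variable {α : Type*} [LinearOrder α] [DecidableEq α]

lemma sorted_window {l : List α} (h : l.Pairwise (· < ·)) (i j : ℕ) :
    ((l.drop i).take j).Pairwise (· < ·) :=
  List.Pairwise.sublist ((List.take_sublist _ _).trans (List.drop_sublist _ _)) h

lemma sort_of_sorted {l : List α} (h : l.Pairwise (· < ·)) :
    l.toFinset.sort (· ≤ ·) = l :=
  (List.toFinset_sort (· ≤ ·) h.nodup).mpr (h.imp le_of_lt)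

lemma mem_window {l : List α} {i j : ℕ} {x : α}
    (hx : x ∈ ((l.drop i).take j).toFinset) : x ∈ l :=
  List.Sublist.mem (List.mem_toFinset.mp hx) ((List.take_sublist _ _).trans (List.drop_sublist _ _))

lemma window_card {l : List α} (h : l.Pairwise (· < ·)) {i j : ℕ} (hij : i + j ≤ l.length) :
    ((l.drop i).take j).toFinset.card = j := by
  rw [List.toFinset_card_of_nodup (sorted_window h i j).nodup, List.length_take,
    List.length_drop]
  omega

end helpers

lemma lowerStep (K r n N : ℕ) (hK : 1 ≤ K)
    (h : ∀ χ : Finset (Fin N) → Bool,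
      hasTightPath (K+1) (K+1+(r+1)) χ true ∨ monoClique (K+1) χ false n) :
    ∀ φ : Finset (Fin N) → Fin (r+2), ∃ c, monoCliqueC K φ c (n / (r+2)) := by
  intro φ
  classical
  set m := n / (r + 2) with hm
  set χ : Finset (Fin N) → Bool := fun E =>
    decide (E.card = K + 1 ∧
      (φ (((E.sort (· ≤ ·)).take K).toFinset)).val
        < (φ (((E.sort (· ≤ ·)).drop 1).toFinset)).val) with hχdef
  rcases h χ with hred | hblue
  · -- a red tight path is impossible
    exfalso
    obtain ⟨S, hScard, hSwin⟩ := hred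
    set l := S.sort (· ≤ ·) with hl
    have hsort : l.Pairwise (· < ·) := (List.sortedLT_iff_pairwise.mp (Finset.sortedLT_sort S))
    have hlen : l.length = K + 1 + (r + 1) := by rw [hl, Finset.length_sort, hScard]
    have hstep : ∀ i, i + (K + 1) ≤ K + 1 + (r + 1) →
        (φ (((l.drop i).take K).toFinset)).val
          < (φ (((l.drop (i+1)).take K).toFinset)).val := by
      intro i hi
      have hw := hSwin i hi
      set w := (l.drop i).take (K+1) with hwdef
      have hwsort : w.Pairwise (· < ·) := sorted_window hsort _ _
      have hwsorteq : w.toFinset.sort (· ≤ ·) = w := sort_of_sorted hwsort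
      have htk : w.take K = (l.drop i).take K := by
        rw [hwdef, List.take_take, min_eq_left (Nat.le_succ K)]
      have hd1 : w.drop 1 = (l.drop (i+1)).take K := by
        rw [hwdef, List.drop_take, List.drop_drop, Nat.add_sub_cancel]
      simp only [hχdef] at hw
      have hw' := of_decide_eq_true hw
      have := hw'.2
      rwa [hwsorteq, htk, hd1] at this
    have hchain : ∀ j, j ≤ r + 2 → j ≤ (φ (((l.drop j).take K).toFinset)).val := by
      intro j
      induction j with
      | zero => intro _; exact Nat.zero_le _
      | succ j ih =>
        intro hj
        have h1 := ih (by omega)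
        have h2 := hstep j (by omega)
        omega
    have hfinal := hchain (r + 2) le_rfl
    have := (φ (((l.drop (r+2)).take K).toFinset)).isLt
    omega
  · -- blue clique: extract a monochromatic block
    obtain ⟨S, hScard, hSblue⟩ := hblue
    set v := S.sort (· ≤ ·) with hv
    have hsort : v.Pairwise (· < ·) := (List.sortedLT_iff_pairwise.mp (Finset.sortedLT_sort S))
    have hvlen : v.length = n := by rw [hv, Finset.length_sort, hScard]
    have hwinmono : ∀ c : List (Fin N), c.Pairwise (· < ·) → (∀ x ∈ c, x ∈ S) →
        ∀ i, i + (K+1) ≤ c.length →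
        (φ (((c.drop (i+1)).take K).toFinset)).val
          ≤ (φ (((c.drop i).take K).toFinset)).val := by
      intro c hcs hcm i hi
      set w := (c.drop i).take (K+1) with hwdef
      have hwsort : w.Pairwise (· < ·) := sorted_window hcs _ _
      have hwsorteq : w.toFinset.sort (· ≤ ·) = w := sort_of_sorted hwsort
      have hwsub : w.toFinset ⊆ S := fun x hx => hcm x (mem_window hx)
      have hwcard : w.toFinset.card = K + 1 := window_card hcs hi
      have htk : w.take K = (c.drop i).take K := by
        rw [hwdef, List.take_take, min_eq_left (Nat.le_succ K)]
      have hd1 : w.drop 1 = (c.drop (i+1)).take K := by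
        rw [hwdef, List.drop_take, List.drop_drop, Nat.add_sub_cancel]
      have hfalse := hSblue w.toFinset hwsub hwcard
      simp only [hχdef] at hfalse
      have hnp := of_decide_eq_false hfalse
      by_contra hcon
      push_neg at hcon
      exact hnp ⟨hwcard, by rw [hwsorteq, htk, hd1]; exact hcon⟩
    have hcross : ∀ e f : Finset (Fin N), e ⊆ S → f ⊆ S → e.card = K → f.card = K →
        (∀ x ∈ e, ∀ y ∈ f, x < y) → (φ f).val ≤ (φ e).val := by
      intro e f he hf hce hcf hxy
      set c := e.sort (· ≤ ·) ++ f.sort (· ≤ ·) with hcdef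
      have hlene : (e.sort (· ≤ ·)).length = K := by rw [Finset.length_sort, hce]
      have hlenf : (f.sort (· ≤ ·)).length = K := by rw [Finset.length_sort, hcf]
      have hcs : c.Pairwise (· < ·) := by
        rw [hcdef]
        refine List.pairwise_append.mpr ⟨(List.sortedLT_iff_pairwise.mp (Finset.sortedLT_sort e)), (List.sortedLT_iff_pairwise.mp (Finset.sortedLT_sort f)), ?_⟩
        intro a ha b hb
        exact hxy a ((Finset.mem_sort _).mp ha) b ((Finset.mem_sort _).mp hb)
      have hcm : ∀ x ∈ c, x ∈ S := by
        intro x hx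
        rcases List.mem_append.mp hx with hx | hx
        · exact he ((Finset.mem_sort _).mp hx)
        · exact hf ((Finset.mem_sort _).mp hx)
      have hclen : c.length = K + K := by
        rw [hcdef, List.length_append, hlene, hlenf]
      have htake : c.take K = e.sort (· ≤ ·) := by
        rw [hcdef]; exact List.take_left' hlene
      have hdrop : c.drop K = f.sort (· ≤ ·) := by
        rw [hcdef]; exact List.drop_left' hlene
      have h0eq : ((c.drop (K - K)).take K).toFinset = e := by
        rw [Nat.sub_self, List.drop_zero, htake, Finset.sort_toFinset]
      have hKeq : ((c.drop K).take K).toFinset = f := by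
        rw [hdrop, List.take_of_length_le (le_of_eq hlenf), Finset.sort_toFinset]
      have haux : ∀ d, d ≤ K → (φ f).val ≤ (φ (((c.drop (K - d)).take K).toFinset)).val := by
        intro d
        induction d with
        | zero =>
          intro _
          rw [Nat.sub_zero, hKeq]
        | succ d ih =>
          intro hd
          have h2 := hwinmono c hcs hcm (K - (d+1)) (by omega)
          have h3 : K - (d + 1) + 1 = K - d := by omega
          rw [h3] at h2
          exact le_trans (ih (by omega)) h2
      have := haux K le_rfl
      rwa [h0eq] at this
    -- blocks
    set B : ℕ → Finset (Fin N) := fun t => ((v.drop (t*m)).take m).toFinset with hB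
    have hqm : (r + 2) * m ≤ n := by
      rw [hm, mul_comm]
      exact Nat.div_mul_le_self n (r + 2)
    have hblockbound : ∀ t, t < r + 2 → t * m + m ≤ n := by
      intro t ht
      have h1 : (t + 1) * m ≤ (r + 2) * m := Nat.mul_le_mul_right m (by omega)
      have h2 : (t + 1) * m = t * m + m := by ring
      omega
    have hBcard : ∀ t, t < r + 2 → (B t).card = m := by
      intro t ht
      simp only [hB]
      exact window_card hsort (by rw [hvlen]; exact hblockbound t ht)
    have hBsub : ∀ t, B t ⊆ S := by
      intro t x hx
      simp only [hB] at hx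
      have hxv : x ∈ v := mem_window hx
      rw [hv] at hxv
      exact (Finset.mem_sort _).mp hxv
    have hBmem : ∀ t, t < r + 2 → ∀ x ∈ B t, ∃ i, i < m ∧ ∃ (hi : t * m + i < v.length),
        v[t * m + i] = x := by
      intro t ht x hx
      simp only [hB, List.mem_toFinset] at hx
      obtain ⟨i, hi, hgi⟩ := List.mem_iff_getElem.mp hx
      have hi' : i < m := by
        have := hi
        rw [List.length_take, List.length_drop] at this
        omega
      have hlt : t * m + i < v.length := by
        have := hblockbound t ht
        omega
      refine ⟨i, hi', hlt, ?_⟩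
      rw [← hgi, List.getElem_take, List.getElem_drop]
    have hBorder : ∀ t t', t < t' → t' < r + 2 → ∀ x ∈ B t, ∀ y ∈ B t', x < y := by
      intro t t' htt' ht' x hx y hy
      obtain ⟨i, hi, hilt, hxe⟩ := hBmem t (by omega) x hx
      obtain ⟨j, hj, hjlt, hye⟩ := hBmem t' ht' y hy
      have hidx : t * m + i < t' * m + j := by
        have h1 : (t + 1) * m ≤ t' * m := Nat.mul_le_mul_right m (by omega)
        have h2 : (t + 1) * m = t * m + m := by ring
        omega
      have := (List.pairwise_iff_getElem.mp hsort) (t * m + i) (t' * m + j) hilt hjlt hidx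
      rwa [hxe, hye] at this
    by_cases hex : ∃ t, t < r + 2 ∧ ∃ c : Fin (r+2), ∀ e ⊆ B t, e.card = K → φ e = c
    · obtain ⟨t, ht, c, hc⟩ := hex
      exact ⟨c, B t, hBcard t ht, fun e he hcard => hc e he hcard⟩
    · exfalso
      push_neg at hex
      have hpair : ∀ t, t < r + 2 → ∃ g f : Finset (Fin N), g ⊆ B t ∧ f ⊆ B t ∧
          g.card = K ∧ f.card = K ∧ (φ g).val < (φ f).val := by
        intro t ht
        obtain ⟨e1, he1, hc1, -⟩ := hex t ht ⟨0, by omega⟩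
        obtain ⟨e2, he2, hc2, hne⟩ := hex t ht (φ e1)
        have hvne : (φ e2).val ≠ (φ e1).val := fun hh => hne (Fin.ext hh)
        rcases Nat.lt_or_ge (φ e2).val (φ e1).val with hlt | hge
        · exact ⟨e2, e1, he2, he1, hc2, hc1, hlt⟩
        · exact ⟨e1, e2, he1, he2, hc1, hc2, by omega⟩
      choose g f hg hf hcg hcf hlt using hpair
      set G : ℕ → ℕ := fun t => if ht : t < r + 2 then (φ (g t ht)).val else 0 with hG
      have hdesc : ∀ t (ht : t + 1 < r + 2), G (t + 1) < G t := by
        intro t ht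
        have ht' : t < r + 2 := by omega
        have h1 : (φ (f (t+1) ht)).val ≤ (φ (g t ht')).val := by
          apply hcross _ _ ((hg t ht').trans (hBsub t)) ((hf (t+1) ht).trans (hBsub (t+1)))
            (hcg t ht') (hcf (t+1) ht)
          intro x hx y hy
          exact hBorder t (t+1) (by omega) ht x (hg t ht' hx) y (hf (t+1) ht hy)
        have h2 := hlt (t+1) ht
        rw [hG]
        simp only [dif_pos ht, dif_pos ht']
        omega
      have hbound : ∀ t (ht : t < r + 2), G t + t ≤ r := by
        intro t
        induction t with
        | zero =>
          intro ht
          have h1 := hlt 0 ht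
          have h2 := (φ (f 0 ht)).isLt
          rw [hG]
          simp only [dif_pos ht]
          omega
        | succ t ih =>
          intro ht
          have h1 := ih (by omega)
          have h2 := hdesc t ht
          omega
      have hfin := hbound (r + 1) (by omega)
      omega

lemma upperStep (K r n N : ℕ) (hK : 1 ≤ K)
    (h : ∀ φ : Finset (Fin N) → Fin (r+2), ∃ c, monoCliqueC K φ c n) :
    ∀ χ : Finset (Fin N) → Bool,
      hasTightPath (K+1) (K+1+(r+1)) χ true ∨ monoClique (K+1) χ false n := by
  intro χ
  classical
  set Good : List (Fin N) → Prop := fun l => l.Pairwise (· < ·) ∧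
    ∀ i, i + (K+1) ≤ l.length → χ (((l.drop i).take (K+1)).toFinset) = true with hGood
  set L : Finset (Fin N) → ℕ := fun e =>
    Nat.findGreatest (fun t => ∃ l, Good l ∧ l.drop (l.length - K) = e.sort (· ≤ ·)
      ∧ l.length = t) N with hL
  have hlenbound : ∀ l : List (Fin N), l.Pairwise (· < ·) → l.length ≤ N := by
    intro l hl
    have := hl.nodup.length_le_card
    rwa [Fintype.card_fin] at this
  have hLbase : ∀ e : Finset (Fin N), e.card = K → K ≤ L e := by
    intro e hce
    have hlen : (e.sort (· ≤ ·)).length = K := by rw [Finset.length_sort, hce]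
    have hKN : K ≤ N := by
      have h1 := Finset.card_le_univ e
      rwa [Fintype.card_fin, hce] at h1
    apply Nat.le_findGreatest hKN
    refine ⟨e.sort (· ≤ ·), ⟨(List.sortedLT_iff_pairwise.mp (Finset.sortedLT_sort e)), fun i hi => absurd hi (by omega)⟩, ?_, hlen⟩
    rw [hlen, Nat.sub_self, List.drop_zero]
  have hLspec : ∀ e : Finset (Fin N), e.card = K → ∃ l, Good l ∧
      l.drop (l.length - K) = e.sort (· ≤ ·) ∧ l.length = L e := by
    intro e hce
    have hlen : (e.sort (· ≤ ·)).length = K := by rw [Finset.length_sort, hce]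
    have hKN : K ≤ N := by
      have h1 := Finset.card_le_univ e
      rwa [Fintype.card_fin, hce] at h1
    have hw : (fun t => ∃ l, Good l ∧ l.drop (l.length - K) = e.sort (· ≤ ·) ∧ l.length = t) K := by
      refine ⟨e.sort (· ≤ ·), ⟨(List.sortedLT_iff_pairwise.mp (Finset.sortedLT_sort e)), fun i hi => absurd hi (by omega)⟩, ?_, hlen⟩
      rw [hlen, Nat.sub_self, List.drop_zero]
    exact Nat.findGreatest_spec (P := fun t => ∃ l, Good l ∧ l.drop (l.length - K) = e.sort (· ≤ ·) ∧ l.length = t) hKN hw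
  by_cases hbig : ∃ e : Finset (Fin N), e.card = K ∧ K + (r + 2) ≤ L e
  · -- long red path exists
    left
    obtain ⟨e, hce, hbige⟩ := hbig
    obtain ⟨l, ⟨hsort, hwin⟩, hends, hlen⟩ := hLspec e hce
    have hslen : K + 1 + (r + 1) ≤ l.length := by omega
    set l' := l.take (K + 1 + (r + 1)) with hl'
    have hl'sort : l'.Pairwise (· < ·) := List.Pairwise.sublist (List.take_sublist _ _) hsort
    have hl'len : l'.length = K + 1 + (r + 1) := by
      rw [hl', List.length_take]; omega
    refine ⟨l'.toFinset, ?_, ?_⟩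
    · rw [List.toFinset_card_of_nodup hl'sort.nodup, hl'len]
    · intro i hi
      rw [sort_of_sorted hl'sort]
      have hwineq : (l'.drop i).take (K+1) = (l.drop i).take (K+1) := by
        rw [hl', List.drop_take, List.take_take, min_eq_left (by omega)]
      rw [hwineq]
      exact hwin i (by omega)
  · -- no long path: monochromatic blue clique
    right
    push_neg at hbig
    set φ : Finset (Fin N) → Fin (r + 2) := fun e =>
      ⟨min (L e - K) (r + 1), lt_of_le_of_lt (min_le_right _ _) (by omega)⟩ with hφ
    obtain ⟨c, S, hScard, hSmono⟩ := h φ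
    refine ⟨S, hScard, ?_⟩
    intro e' he' hce'
    by_contra hne
    have htrue : χ e' = true := by
      cases hh : χ e'
      · exact absurd hh hne
      · rfl
    set l := e'.sort (· ≤ ·) with hldef
    have hsort : l.Pairwise (· < ·) := (List.sortedLT_iff_pairwise.mp (Finset.sortedLT_sort e'))
    have hllen : l.length = K + 1 := by rw [hldef, Finset.length_sort, hce']
    have htksort : (l.take K).Pairwise (· < ·) := List.Pairwise.sublist (List.take_sublist _ _) hsort
    have hdpsort : (l.drop 1).Pairwise (· < ·) := List.Pairwise.sublist (List.drop_sublist _ _) hsort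
    set e₁ := (l.take K).toFinset with he₁
    set e₂ := (l.drop 1).toFinset with he₂
    have hsub : ∀ x ∈ l, x ∈ S := by
      intro x hx
      rw [hldef] at hx
      exact he' ((Finset.mem_sort _).mp hx)
    have he₁sub : e₁ ⊆ S := by
      intro x hx
      exact hsub x (List.Sublist.mem (List.mem_toFinset.mp hx) (List.take_sublist _ _))
    have he₂sub : e₂ ⊆ S := by
      intro x hx
      exact hsub x (List.Sublist.mem (List.mem_toFinset.mp hx) (List.drop_sublist _ _))
    have hc₁ : e₁.card = K := by
      rw [he₁, List.toFinset_card_of_nodup htksort.nodup, List.length_take]; omega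
    have hc₂ : e₂.card = K := by
      rw [he₂, List.toFinset_card_of_nodup hdpsort.nodup, List.length_drop]; omega
    have hφeq : φ e₁ = φ e₂ := (hSmono e₁ he₁sub hc₁).trans (hSmono e₂ he₂sub hc₂).symm
    have hLe₁ : L e₁ = L e₂ := by
      have hv := congrArg Fin.val hφeq
      simp only [hφ] at hv
      have hb₁ := hLbase e₁ hc₁
      have hb₂ := hLbase e₂ hc₂
      have hs₁ := hbig e₁ hc₁
      have hs₂ := hbig e₂ hc₂
      omega
    -- extend the best path ending at e₁ by the last vertex of e'
    obtain ⟨p, ⟨hpsort, hpwin⟩, hpends, hplen⟩ := hLspec e₁ hc₁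
    have hpK : K ≤ p.length := by rw [hplen]; exact hLbase e₁ hc₁
    have hbK : K < l.length := by omega
    set b := l[K] with hb
    have hdropK : l.drop K = [b] := by
      rw [List.drop_eq_getElem_cons hbK, List.drop_eq_nil_of_le (by omega)]
    have hsplit : l.take K ++ [b] = l := by
      rw [← hdropK, List.take_append_drop]
    have hpendsl : p.drop (p.length - K) = l.take K := by
      rw [hpends, he₁, sort_of_sorted htksort]
    -- all elements of p are < b
    have hplt : ∀ x ∈ p, x < b := by
      intro x hx
      have hx' : x ∈ p.take (p.length - K) ++ p.drop (p.length - K) := by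
        rw [List.take_append_drop]; exact hx
      have hgetlt : ∀ (i : ℕ) (hiK : i < K), l[i]'(by omega) < b := by
        intro i hiK
        exact (List.pairwise_iff_getElem.mp hsort) i K (by omega) hbK hiK
      have hmemtk : ∀ y ∈ l.take K, y < b := by
        intro y hy
        obtain ⟨i, hi, hgi⟩ := List.mem_iff_getElem.mp hy
        have hi' : i < K := by
          rw [List.length_take] at hi; omega
        rw [← hgi, List.getElem_take]
        exact hgetlt i hi'
      rcases List.mem_append.mp hx' with hx1 | hx2
      · -- x in the front part: it is below everything in the tail
        have hcross : ∀ a ∈ p.take (p.length - K), ∀ y ∈ p.drop (p.length - K), a < y := by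
          have hpp := hpsort
          rw [← List.take_append_drop (p.length - K) p] at hpp
          exact (List.pairwise_append.mp hpp).2.2
        have htklen : (p.drop (p.length - K)).length = K := by
          rw [List.length_drop]; omega
        have hne' : p.drop (p.length - K) ≠ [] := by
          intro hnil
          rw [hnil] at htklen
          simp at htklen
          omega
        obtain ⟨y, hy⟩ := List.exists_mem_of_ne_nil _ hne'
        have hxy := hcross x hx1 y hy
        have hyb : y < b := hmemtk y (hpendsl ▸ hy)
        exact lt_trans hxy hyb
      · exact hmemtk x (hpendsl ▸ hx2)
    set p' := p ++ [b] with hp'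
    have hp'len : p'.length = p.length + 1 := by rw [hp', List.length_append]; rfl
    have hp'sort : p'.Pairwise (· < ·) := by
      rw [hp']
      refine List.pairwise_append.mpr ⟨hpsort, List.pairwise_singleton _ _, ?_⟩
      intro a ha b' hb'
      rw [List.mem_singleton.mp hb']
      exact hplt a ha
    have hp'good : Good p' := by
      refine ⟨hp'sort, ?_⟩
      intro i hi
      rw [hp'len] at hi
      by_cases hcase : i + (K + 1) ≤ p.length
      · have hdropeq : p'.drop i = p.drop i ++ [b] :=
          List.drop_append_of_le_length (by omega)
        have htakeeq : (p'.drop i).take (K+1) = (p.drop i).take (K+1) := by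
          rw [hdropeq]
          exact List.take_append_of_le_length (by rw [List.length_drop]; omega)
        rw [htakeeq]
        exact hpwin i hcase
      · have hieq : i = p.length - K := by omega
        have hdropeq : p'.drop i = l.take K ++ [b] := by
          rw [hp', List.drop_append_of_le_length (by omega), hieq, hpendsl]
        have : (p'.drop i).take (K+1) = l := by
          rw [hdropeq, hsplit]
          exact List.take_of_length_le (by omega)
        rw [this, hldef, Finset.sort_toFinset]
        exact htrue
    have hp'ends : p'.drop (p'.length - K) = e₂.sort (· ≤ ·) := by
      have h1 : p'.length - K = (p.length - K) + 1 := by rw [hp'len]; omega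
      rw [h1, hp', List.drop_append_of_le_length (by omega)]
      have h2 : p.drop (p.length - K + 1) = (l.take K).drop 1 := by
        rw [← hpendsl, ← List.drop_drop]
      rw [h2, he₂, sort_of_sorted hdpsort]
      conv_rhs => rw [← hsplit]
      rw [List.drop_append_of_le_length (l₁ := l.take K) (l₂ := [b]) (i := 1)
        (by rw [List.length_take]; omega)]
    have hLe₂big : L e₁ + 1 ≤ L e₂ := by
      have hbnd : L e₁ + 1 ≤ N := by
        have h3 := hlenbound p' hp'sort
        rw [hp'len] at h3
        rw [← hplen]
        omega
      apply Nat.le_findGreatest hbnd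
      exact ⟨p', hp'good, hp'ends, by rw [hp'len, hplen]⟩
    rw [hLe₁] at hLe₂big
    exact Nat.not_succ_le_self _ hLe₂big


theorem stmt_2 : ∀ k s n : ℕ, 2 ≤ k → k + 1 ≤ s →
    ramseyMulti (k - 1) (n / (s - k + 1)) (s - k + 1) ≤ rbar k s n ∧
    rbar k s n ≤ ramseyMulti (k - 1) n (s - k + 1) := by
  intro k s n hk hs
  obtain ⟨K, rfl⟩ : ∃ K, k = K + 1 := ⟨k - 1, by omega⟩
  obtain ⟨r, rfl⟩ : ∃ r, s = K + 1 + (r + 1) := ⟨s - K - 2, by omega⟩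
  have hK : 1 ≤ K := by omega
  have h1 : K + 1 - 1 = K := by omega
  have h2 : K + 1 + (r + 1) - (K + 1) + 1 = r + 2 := by omega
  rw [h1, h2]
  have hCne : ∃ N : ℕ, N ∈ {N | ∀ χ : Finset (Fin N) → Fin (r+2), ∃ c : Fin (r+2),
      monoCliqueC K χ c n} := by
    obtain ⟨N, hN⟩ := ramseyFin K (r+2) n (by omega)
    exact ⟨N, fun χ => hN χ⟩
  have hNC : sInf {N | ∀ χ : Finset (Fin N) → Fin (r+2), ∃ c : Fin (r+2),
      monoCliqueC K χ c n} ∈ {N | ∀ χ : Finset (Fin N) → Fin (r+2), ∃ c : Fin (r+2),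
      monoCliqueC K χ c n} := Nat.sInf_mem hCne
  have hNCB : sInf {N | ∀ χ : Finset (Fin N) → Fin (r+2), ∃ c : Fin (r+2),
      monoCliqueC K χ c n} ∈ {N | ∀ χ : Finset (Fin N) → Bool,
      hasTightPath (K+1) (K+1+(r+1)) χ true ∨ monoClique (K+1) χ false n} :=
    upperStep K r n _ hK hNC
  constructor
  · have hNB := Nat.sInf_mem (s := {N | ∀ χ : Finset (Fin N) → Bool,
        hasTightPath (K+1) (K+1+(r+1)) χ true ∨ monoClique (K+1) χ false n}) ⟨_, hNCB⟩
    exact Nat.sInf_le (lowerStep K r n _ hK hNB)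
  · exact Nat.sInf_le hNCB
end

section
/- The following two statements are equivalent: (i) there is a constant c > 0 such that r_3(n,n) > 2^{2^{cn}} for all sufficiently large n; (ii) there is a constant c > 0 such that r̄_4(P_5, n) ≥ 2^{2^{cn}} for all sufficiently large n. -/
open Filter

section ListHelpers
set_option linter.unusedSectionVars false
variable {α : Type*} [LinearOrder α] [DecidableEq α]

lemma sorted_lt_sort_eq {l : List α} (hl : l.Pairwise (· < ·)) :
    l.toFinset.sort (· ≤ ·) = l :=
  (List.toFinset_sort _ hl.nodup).2 (hl.imp le_of_lt)

lemma exists_len3 {l : List α} (h : l.length = 3) : ∃ a b c : α, l = [a, b, c] :=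
  List.length_eq_three.mp h

lemma exists_len4 {l : List α} (h : l.length = 4) : ∃ a b c d : α, l = [a, b, c, d] := by
  rcases l with _ | ⟨a, _ | ⟨b, _ | ⟨c, _ | ⟨d, _ | ⟨e, t⟩⟩⟩⟩⟩ <;>
    simp only [List.length] at h <;> first
      | omega
      | exact ⟨a, b, c, d, rfl⟩

lemma exists_len5 {l : List α} (h : l.length = 5) : ∃ a b c d e : α, l = [a, b, c, d, e] := by
  rcases l with _ | ⟨a, _ | ⟨b, _ | ⟨c, _ | ⟨d, _ | ⟨e, _ | ⟨f, t⟩⟩⟩⟩⟩⟩ <;>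
    simp only [List.length] at h <;> first
      | omega
      | exact ⟨a, b, c, d, e, rfl⟩

lemma chain3_sort {a b c : α} (hab : a < b) (hbc : b < c) :
    ({a, b, c} : Finset α).sort (· ≤ ·) = [a, b, c] := by
  have : ([a, b, c] : List α).Pairwise (· < ·) := by
    simp [List.pairwise_cons, hab, hbc, hab.trans hbc]
  have h := sorted_lt_sort_eq this
  simpa using h

lemma chain4_sort {a b c d : α} (hab : a < b) (hbc : b < c) (hcd : c < d) :
    ({a, b, c, d} : Finset α).sort (· ≤ ·) = [a, b, c, d] := by
  have : ([a, b, c, d] : List α).Pairwise (· < ·) := by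
    simp [List.pairwise_cons, hab, hbc, hcd, hab.trans hbc, hbc.trans hcd,
      (hab.trans hbc).trans hcd]
  have h := sorted_lt_sort_eq this
  simpa using h

lemma chain5_sort {a b c d e : α} (hab : a < b) (hbc : b < c) (hcd : c < d) (hde : d < e) :
    ({a, b, c, d, e} : Finset α).sort (· ≤ ·) = [a, b, c, d, e] := by
  have : ([a, b, c, d, e] : List α).Pairwise (· < ·) := by
    simp [List.pairwise_cons, hab, hbc, hcd, hde, hab.trans hbc, hbc.trans hcd, hcd.trans hde,
      (hab.trans hbc).trans hcd, (hbc.trans hcd).trans hde,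
      ((hab.trans hbc).trans hcd).trans hde]
  have h := sorted_lt_sort_eq this
  simpa using h

lemma chain3_card {a b c : α} (hab : a < b) (hbc : b < c) :
    ({a, b, c} : Finset α).card = 3 := by
  rw [← Finset.length_sort (· ≤ ·), chain3_sort hab hbc]; rfl

lemma chain4_card {a b c d : α} (hab : a < b) (hbc : b < c) (hcd : c < d) :
    ({a, b, c, d} : Finset α).card = 4 := by
  rw [← Finset.length_sort (· ≤ ·), chain4_sort hab hbc hcd]; rfl

lemma chain5_card {a b c d e : α} (hab : a < b) (hbc : b < c) (hcd : c < d) (hde : d < e) :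
    ({a, b, c, d, e} : Finset α).card = 5 := by
  rw [← Finset.length_sort (· ≤ ·), chain5_sort hab hbc hcd hde]; rfl

lemma card3_decomp {s : Finset α} (h : s.card = 3) :
    ∃ a b c : α, a < b ∧ b < c ∧ s = {a, b, c} := by
  have hlen : (s.sort (· ≤ ·)).length = 3 := by rwa [Finset.length_sort]
  obtain ⟨a, b, c, hl⟩ := exists_len3 hlen
  have hs := s.sortedLT_sort.pairwise
  rw [hl] at hs
  simp only [List.pairwise_cons, List.mem_cons, List.mem_singleton, List.not_mem_nil] at hs
  have hst := Finset.sort_toFinset s (· ≤ ·)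
  rw [hl] at hst
  refine ⟨a, b, c, ?_, ?_, ?_⟩
  · exact hs.1 b (by simp)
  · exact hs.2.1 c (by simp)
  · rw [← hst]; simp

lemma card4_decomp {s : Finset α} (h : s.card = 4) :
    ∃ a b c d : α, a < b ∧ b < c ∧ c < d ∧ s = {a, b, c, d} := by
  have hlen : (s.sort (· ≤ ·)).length = 4 := by rwa [Finset.length_sort]
  obtain ⟨a, b, c, d, hl⟩ := exists_len4 hlen
  have hs := s.sortedLT_sort.pairwise
  rw [hl] at hs
  simp only [List.pairwise_cons, List.mem_cons, List.mem_singleton, List.not_mem_nil] at hs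
  have hst := Finset.sort_toFinset s (· ≤ ·)
  rw [hl] at hst
  refine ⟨a, b, c, d, ?_, ?_, ?_, ?_⟩
  · exact hs.1 b (by simp)
  · exact hs.2.1 c (by simp)
  · exact hs.2.2.1 d (by simp)
  · rw [← hst]; simp

end ListHelpers

section Combinatorics
variable {N n : ℕ}

lemma monoClique_anti {k : ℕ} {χ : Finset (Fin N) → Bool} {c : Bool} {m : ℕ}
    (h : monoClique k χ c m) (hnm : n ≤ m) : monoClique k χ c n := by
  obtain ⟨S, hS, hmono⟩ := h
  obtain ⟨T, hTS, hT⟩ := Finset.exists_subset_card_eq (hS ▸ hnm)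
  exact ⟨T, hT, fun e he hk => hmono e (he.trans hTS) hk⟩

lemma tightPath_of_chain {χ : Finset (Fin N) → Bool} {a b c d e : Fin N}
    (hab : a < b) (hbc : b < c) (hcd : c < d) (hde : d < e)
    (h1 : χ {a, b, c, d} = true) (h2 : χ {b, c, d, e} = true) :
    hasTightPath 4 5 χ true := by
  refine ⟨{a, b, c, d, e}, chain5_card hab hbc hcd hde, ?_⟩
  intro i hi
  rw [chain5_sort hab hbc hcd hde]
  match i, hi with
  | 0, _ => simpa using h1
  | 1, _ => simpa using h2

lemma chain_of_tightPath {χ : Finset (Fin N) → Bool}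
    (h : hasTightPath 4 5 χ true) :
    ∃ a b c d e : Fin N, a < b ∧ b < c ∧ c < d ∧ d < e ∧
      χ {a, b, c, d} = true ∧ χ {b, c, d, e} = true := by
  obtain ⟨S, hcard, hwin⟩ := h
  have hlen : (S.sort (· ≤ ·)).length = 5 := by rwa [Finset.length_sort]
  obtain ⟨a, b, c, d, e, hl⟩ := exists_len5 hlen
  have hs := S.sortedLT_sort.pairwise
  rw [hl] at hs
  simp only [List.pairwise_cons, List.mem_cons, List.mem_singleton, List.not_mem_nil] at hs
  have h0 := hwin 0 (by norm_num)
  have h1 := hwin 1 (by norm_num)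
  rw [hl] at h0 h1
  exact ⟨a, b, c, d, e, hs.1 b (by simp), hs.2.1 c (by simp), hs.2.2.1 d (by simp),
    hs.2.2.2.1 e (by simp), by simpa using h0, by simpa using h1⟩

lemma lemB
    (h : ∀ χ : Finset (Fin N) → Bool, monoClique 3 χ true n ∨ monoClique 3 χ false n) :
    ∀ χ : Finset (Fin N) → Bool, hasTightPath 4 5 χ true ∨ monoClique 4 χ false n := by
  classical
  intro χ
  by_cases hp : hasTightPath 4 5 χ true
  · exact Or.inl hp
  right
  set χ3 : Finset (Fin N) → Bool :=
    fun t => decide (∃ a : Fin N, (∀ x ∈ t, a < x) ∧ χ (insert a t) = true) with hχ3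
  rcases h χ3 with ⟨S, hS, hmono⟩ | ⟨S, hS, hmono⟩
  · refine ⟨S, hS, fun e he hk => ?_⟩
    obtain ⟨x1, x2, x3, x4, h12, h23, h34, he4⟩ := card4_decomp hk
    subst he4
    have ht : ({x1, x2, x3} : Finset (Fin N)) ⊆ S := by
      refine Finset.Subset.trans ?_ he
      intro y hy
      simp only [Finset.mem_insert, Finset.mem_singleton] at hy ⊢
      tauto
    have h3 := hmono {x1, x2, x3} ht (chain3_card h12 h23)
    rw [hχ3] at h3
    simp only [decide_eq_true_eq] at h3
    obtain ⟨a, halt, hared⟩ := h3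
    have hax : a < x1 := halt x1 (by simp)
    cases hval : χ {x1, x2, x3, x4}
    · rfl
    · exact absurd (tightPath_of_chain hax h12 h23 h34 hared hval) hp
  · refine ⟨S, hS, fun e he hk => ?_⟩
    obtain ⟨x1, x2, x3, x4, h12, h23, h34, he4⟩ := card4_decomp hk
    subst he4
    have ht : ({x2, x3, x4} : Finset (Fin N)) ⊆ S := by
      refine Finset.Subset.trans ?_ he
      intro y hy
      simp only [Finset.mem_insert, Finset.mem_singleton] at hy ⊢
      tauto
    have h3 := hmono {x2, x3, x4} ht (chain3_card h23 h34)
    rw [hχ3] at h3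
    simp only [decide_eq_false_iff_not, not_exists, not_and] at h3
    have := h3 x1 (by
      intro x hx
      simp only [Finset.mem_insert, Finset.mem_singleton] at hx
      rcases hx with rfl | rfl | rfl
      · exact h12
      · exact h12.trans h23
      · exact (h12.trans h23).trans h34)
    simpa using this

lemma lemA
    (h : ∀ χ : Finset (Fin N) → Bool, hasTightPath 4 5 χ true ∨ monoClique 4 χ false (2 * n)) :
    ∀ χ : Finset (Fin N) → Bool, monoClique 3 χ true n ∨ monoClique 3 χ false n := by
  classical
  intro χ
  set χ4 : Finset (Fin N) → Bool := fun e =>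
    !χ (((e.sort (· ≤ ·)).take 3).toFinset) && χ (((e.sort (· ≤ ·)).drop 1).toFinset) with hχ4
  have hval : ∀ a b c d : Fin N, a < b → b < c → c < d →
      χ4 {a, b, c, d} = (!χ {a, b, c} && χ {b, c, d}) := by
    intro a b c d hab hbc hcd
    rw [hχ4]
    simp only []
    rw [chain4_sort hab hbc hcd]
    simp
  rcases h χ4 with hp | ⟨S, hScard, hSblue⟩
  · exfalso
    obtain ⟨a, b, c, d, e, hab, hbc, hcd, hde, h1, h2⟩ := chain_of_tightPath hp
    rw [hval a b c d hab hbc hcd] at h1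
    rw [hval b c d e hbc hcd hde] at h2
    simp only [Bool.and_eq_true, Bool.not_eq_true'] at h1 h2
    rw [h1.2] at h2
    exact absurd h2.1 (by simp)
  · have hstep : ∀ a b c d : Fin N, a ∈ S → b ∈ S → c ∈ S → d ∈ S →
        a < b → b < c → c < d → χ {a, b, c} = false → χ {b, c, d} = false := by
      intro a b c d haS hbS hcS hdS hab hbc hcd hf
      have hsub : ({a, b, c, d} : Finset (Fin N)) ⊆ S := by
        intro y hy
        simp only [Finset.mem_insert, Finset.mem_singleton] at hy
        rcases hy with rfl | rfl | rfl | rfl <;> assumption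
      have hblue := hSblue {a, b, c, d} hsub (chain4_card hab hbc hcd)
      rw [hval a b c d hab hbc hcd, hf] at hblue
      simpa using hblue
    by_cases hex : ∃ c0 ∈ S, ∃ a ∈ S, ∃ b ∈ S, a < b ∧ b < c0 ∧ χ {a, b, c0} = false
    · obtain ⟨c0', hc0'S, w1, hw1, w2, hw2, hw12, hw2c, hwf⟩ := hex
      set C := S.filter (fun x => ∃ a ∈ S, ∃ b ∈ S, a < b ∧ b < x ∧ χ {a, b, x} = false) with hC
      have hCne : C.Nonempty := ⟨c0', by
        rw [hC, Finset.mem_filter]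
        exact ⟨hc0'S, w1, hw1, w2, hw2, hw12, hw2c, hwf⟩⟩
      set c1 := C.min' hCne with hc1
      have hc1C : c1 ∈ C := C.min'_mem hCne
      rw [hC, Finset.mem_filter] at hc1C
      obtain ⟨hc1S, a0, ha0S, b0, hb0S, hab0, hb0c1, hf0⟩ := hc1C
      have hAB := Finset.card_filter_add_card_filter_not
        (s := S) (p := fun x => x < c1) 
      rcases le_or_gt n ((S.filter (fun x => x < c1)).card) with hA | hA
      · left
        obtain ⟨T, hTA, hT⟩ := Finset.exists_subset_card_eq hA
        refine ⟨T, hT, fun e he hk => ?_⟩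
        obtain ⟨x, y, z, hxy, hyz, he3⟩ := card3_decomp hk
        subst he3
        have hmem : ∀ w ∈ ({x, y, z} : Finset (Fin N)), w ∈ S ∧ w < c1 := by
          intro w hw
          have := hTA (he hw)
          rwa [Finset.mem_filter] at this
        obtain ⟨hxS, hxlt⟩ := hmem x (by simp)
        obtain ⟨hyS, hylt⟩ := hmem y (by simp)
        obtain ⟨hzS, hzlt⟩ := hmem z (by simp)
        cases hv : χ {x, y, z}
        · exfalso
          have hzC : z ∈ C := by
            rw [hC, Finset.mem_filter]
            exact ⟨hzS, x, hxS, y, hyS, hxy, hyz, hv⟩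
          have := C.min'_le z hzC
          rw [← hc1] at this
          exact absurd hzlt (not_lt.mpr this)
        · rfl
      · right
        have hBcard : n ≤ (S.filter (fun x => ¬ x < c1)).card := by
          rw [hScard] at hAB; omega
        have step1 : ∀ d ∈ S, c1 < d → χ {b0, c1, d} = false :=
          fun d hd h1 => hstep a0 b0 c1 d ha0S hb0S hc1S hd hab0 hb0c1 h1 hf0
        have step2 : ∀ d ∈ S, ∀ e ∈ S, c1 < d → d < e → χ {c1, d, e} = false :=
          fun d hd e he h1 h2 =>
            hstep b0 c1 d e hb0S hc1S hd he hb0c1 h1 h2 (step1 d hd h1)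
        have step3 : ∀ d ∈ S, ∀ e ∈ S, ∀ f ∈ S, c1 < d → d < e → e < f →
            χ {d, e, f} = false :=
          fun d hd e he f hf h1 h2 h3 =>
            hstep c1 d e f hc1S hd he hf h1 h2 h3 (step2 d hd e he h1 h2)
        obtain ⟨T, hTB, hT⟩ := Finset.exists_subset_card_eq hBcard
        refine ⟨T, hT, fun e he hk => ?_⟩
        obtain ⟨x, y, z, hxy, hyz, he3⟩ := card3_decomp hk
        subst he3
        have hmem : ∀ w ∈ ({x, y, z} : Finset (Fin N)), w ∈ S ∧ c1 ≤ w := by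
          intro w hw
          have := hTB (he hw)
          rw [Finset.mem_filter] at this
          exact ⟨this.1, not_lt.mp this.2⟩
        obtain ⟨hxS, hxge⟩ := hmem x (by simp)
        obtain ⟨hyS, _⟩ := hmem y (by simp)
        obtain ⟨hzS, _⟩ := hmem z (by simp)
        rcases eq_or_lt_of_le hxge with heq | hlt
        · rw [← heq]
          rw [← heq] at hxy
          exact step2 y hyS z hzS hxy hyz
        · exact step3 x hxS y hyS z hzS hlt hxy hyz
    · push_neg at hex
      left
      have hn : n ≤ S.card := by rw [hScard]; omega
      obtain ⟨T, hTS, hT⟩ := Finset.exists_subset_card_eq hn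
      refine ⟨T, hT, fun e he hk => ?_⟩
      obtain ⟨x, y, z, hxy, hyz, he3⟩ := card3_decomp hk
      subst he3
      have hmem : ∀ w ∈ ({x, y, z} : Finset (Fin N)), w ∈ S :=
        fun w hw => hTS (he hw)
      have := hex z (hmem z (by simp)) x (hmem x (by simp)) y (hmem y (by simp)) hxy hyz
      simpa using this

end Combinatorics

section Glue

def rset3 (n : ℕ) : Set ℕ :=
  {N | ∀ χ : Finset (Fin N) → Bool, monoClique 3 χ true n ∨ monoClique 3 χ false n}

def bset4 (n : ℕ) : Set ℕ :=
  {N | ∀ χ : Finset (Fin N) → Bool, hasTightPath 4 5 χ true ∨ monoClique 4 χ false n}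

lemma ramsey_def (n : ℕ) : ramsey 3 n n = sInf (rset3 n) := rfl

lemma rbar_def (n : ℕ) : rbar 4 5 n = sInf (bset4 n) := rfl

lemma incl1 (n : ℕ) : bset4 (2 * n) ⊆ rset3 n := fun _ hN => lemA hN

lemma incl2 (n : ℕ) : rset3 n ⊆ bset4 n := fun _ hN => lemB hN

lemma bset4_anti {m n : ℕ} (h : m ≤ n) : bset4 n ⊆ bset4 m := by
  intro N hN χ
  rcases hN χ with hp | hcl
  · exact Or.inl hp
  · exact Or.inr (monoClique_anti hcl h)

lemma nonempty_of_sInf_pos {s : Set ℕ} (h : 0 < sInf s) : s.Nonempty := by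
  by_contra hne
  rw [Set.not_nonempty_iff_eq_empty] at hne
  rw [hne, Nat.sInf_empty] at h
  exact lt_irrefl 0 h

lemma sInf_le_sInf_of_subset {s t : Set ℕ} (h : t ⊆ s) (ht : t.Nonempty) :
    sInf s ≤ sInf t := Nat.sInf_le (h (Nat.sInf_mem ht))

end Glue

theorem stmt_3 :
    (∃ c : ℝ, 0 < c ∧ ∀ᶠ n : ℕ in atTop,
      (2:ℝ) ^ ((2:ℝ) ^ (c * n)) < (ramsey 3 n n : ℝ)) ↔
    (∃ c : ℝ, 0 < c ∧ ∀ᶠ n : ℕ in atTop,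
      (2:ℝ) ^ ((2:ℝ) ^ (c * n)) ≤ (rbar 4 5 n : ℝ)) := by
  constructor
  · rintro ⟨c, hc, hev⟩
    obtain ⟨N0, hN0⟩ := eventually_atTop.1 hev
    have hrne : ∀ k, N0 ≤ k → (rset3 k).Nonempty := by
      intro k hk
      apply nonempty_of_sInf_pos
      rw [← ramsey_def]
      have hlt := hN0 k hk
      have hpos : (0:ℝ) < (ramsey 3 k k : ℝ) := lt_trans (by positivity) hlt
      exact_mod_cast hpos
    refine ⟨c / 4, by linarith, eventually_atTop.2 ⟨2 * N0 + 2, fun m hm => ?_⟩⟩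
    set n := m / 2 with hn
    have h1 : N0 ≤ n := by omega
    have h2 : 2 * n ≤ m := by omega
    have hb2n : (bset4 (2 * n)).Nonempty :=
      ⟨_, incl2 (2 * n) (Nat.sInf_mem (hrne (2 * n) (by omega)))⟩
    have hbm : (bset4 m).Nonempty :=
      ⟨_, incl2 m (Nat.sInf_mem (hrne m (by omega)))⟩
    have s1 : ramsey 3 n n ≤ rbar 4 5 (2 * n) := by
      rw [ramsey_def, rbar_def]
      exact sInf_le_sInf_of_subset (incl1 n) hb2n
    have s2 : rbar 4 5 (2 * n) ≤ rbar 4 5 m := by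
      rw [rbar_def, rbar_def]
      exact sInf_le_sInf_of_subset (bset4_anti h2) hbm
    have hR := hN0 n h1
    have key : (2:ℝ) ^ ((2:ℝ) ^ (c / 4 * m)) ≤ (2:ℝ) ^ ((2:ℝ) ^ (c * n)) := by
      apply (Real.rpow_le_rpow_left_iff (by norm_num : (1:ℝ) < 2)).2
      apply (Real.rpow_le_rpow_left_iff (by norm_num : (1:ℝ) < 2)).2
      have h3 : m ≤ 4 * n := by omega
      have h3' : (m:ℝ) ≤ 4 * n := by exact_mod_cast h3
      nlinarith [hc.le]
    refine le_of_lt ?_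
    calc (2:ℝ) ^ ((2:ℝ) ^ (c / 4 * m)) ≤ (2:ℝ) ^ ((2:ℝ) ^ (c * n)) := key
      _ < (ramsey 3 n n : ℝ) := hR
      _ ≤ (rbar 4 5 m : ℝ) := by exact_mod_cast s1.trans s2
  · rintro ⟨c, hc, hev⟩
    obtain ⟨N0, hN0⟩ := eventually_atTop.1 hev
    have hbne : ∀ k, N0 ≤ k → (bset4 k).Nonempty := by
      intro k hk
      apply nonempty_of_sInf_pos
      rw [← rbar_def]
      have hle := hN0 k hk
      have hpos : (0:ℝ) < (rbar 4 5 k : ℝ) := lt_of_lt_of_le (by positivity) hle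
      exact_mod_cast hpos
    refine ⟨c / 2, by linarith, eventually_atTop.2 ⟨N0 + 1, fun n hn => ?_⟩⟩
    have hrn : (rset3 n).Nonempty :=
      ⟨_, incl1 n (Nat.sInf_mem (hbne (2 * n) (by omega)))⟩
    have s1 : rbar 4 5 n ≤ ramsey 3 n n := by
      rw [ramsey_def, rbar_def]
      exact sInf_le_sInf_of_subset (incl2 n) hrn
    have hR := hN0 n (by omega)
    have key : (2:ℝ) ^ ((2:ℝ) ^ (c / 2 * n)) < (2:ℝ) ^ ((2:ℝ) ^ (c * n)) := by
      apply (Real.rpow_lt_rpow_left_iff (by norm_num : (1:ℝ) < 2)).2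
      apply (Real.rpow_lt_rpow_left_iff (by norm_num : (1:ℝ) < 2)).2
      have hn1 : (1:ℝ) ≤ (n:ℝ) := by exact_mod_cast (by omega : 1 ≤ n)
      nlinarith
    calc (2:ℝ) ^ ((2:ℝ) ^ (c / 2 * n)) < (2:ℝ) ^ ((2:ℝ) ^ (c * n)) := key
      _ ≤ (rbar 4 5 n : ℝ) := hR
      _ ≤ (ramsey 3 n n : ℝ) := by exact_mod_cast s1
end

section
/- There exist absolute constants c_1, c_2 > 0 such that for all sufficiently large n: 2^{c_1 n^2} < r_3(n,n) < 2^{2^{c_2 n}}. -/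
open Filter

namespace Stmt9

variable {α : Type*} [DecidableEq α]

lemma exists_big_half (W : Finset α) (p : α → Bool) :
    ∃ b, W.card ≤ 2 * (W.filter (fun y => p y = b)).card := by
  have key0 := Finset.card_filter_add_card_filter_not (s := W)
      (p := fun y => p y = true)
  have keq : W.filter (fun y => ¬ p y = true) = W.filter (fun y => p y = false) := by
    apply Finset.filter_congr
    intro y _
    simp
  rw [keq] at key0
  have key : (W.filter fun y => p y = true).card + (W.filter fun y => p y = false).card
      = W.card := key0
  rcases le_total (W.filter fun y => p y = true).card (W.filter fun y => p y = false).card with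
    h | h
  · exact ⟨false, by omega⟩
  · exact ⟨true, by omega⟩

theorem graphRamsey (χ : Finset α → Bool) :
    ∀ (r : ℕ) (w : Bool → ℕ) (V : Finset α), w true + w false ≤ r →
      2 ^ (w true + w false) ≤ V.card →
      ∃ (c : Bool) (S : Finset α), S ⊆ V ∧ S.card = w c ∧
        ∀ e ⊆ S, e.card = 2 → χ e = c := by
  intro r
  induction r with
  | zero =>
    intro w V hr _
    refine ⟨true, ∅, Finset.empty_subset _, by simp; omega, ?_⟩
    intro e he hcard
    rw [Finset.subset_empty] at he
    simp [he] at hcard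
  | succ r ih =>
    intro w V hr hV
    by_cases h0 : w true = 0 ∨ w false = 0
    · rcases h0 with h0 | h0
      · exact ⟨true, ∅, Finset.empty_subset _, by simp; omega, fun e he hc => by
          rw [Finset.subset_empty] at he; simp [he] at hc⟩
      · exact ⟨false, ∅, Finset.empty_subset _, by simp; omega, fun e he hc => by
          rw [Finset.subset_empty] at he; simp [he] at hc⟩
    push_neg at h0
    have hVne : V.Nonempty := Finset.card_pos.mp (lt_of_lt_of_le (Nat.pow_pos (by norm_num)) hV)
    obtain ⟨v, hv⟩ := hVne
    set W := V.erase v with hW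
    have hWcard : W.card = V.card - 1 := Finset.card_erase_of_mem hv
    obtain ⟨b, hb0⟩ := exists_big_half W (fun y => χ {v, y})
    have hb : W.card ≤ 2 * (W.filter (fun y => χ {v, y} = b)).card := hb0
    set A := W.filter (fun y => χ {v, y} = b) with hA
    -- size of A
    have hsum : 1 ≤ w true + w false := by omega
    have hpow : 2 ^ (w true + w false) = 2 * 2 ^ (w true + w false - 1) := by
      rw [← pow_succ']
      congr 1
      omega
    have hAcard : 2 ^ (w true + w false - 1) ≤ A.card := by omega
    set w' : Bool → ℕ := fun c => if c = b then w c - 1 else w c with hw'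
    have hsum' : w' true + w' false = w true + w false - 1 := by
      cases b <;> simp [hw'] <;> omega
    obtain ⟨c, S, hSA, hScard, hclique⟩ := ih w' A (by omega) (by rw [hsum']; exact hAcard)
    have hAW : A ⊆ W := Finset.filter_subset _ _
    have hWV : W ⊆ V := Finset.erase_subset _ _
    by_cases hcb : c = b
    · subst hcb
      refine ⟨c, insert v S, ?_, ?_, ?_⟩
      · exact Finset.insert_subset hv (hSA.trans (hAW.trans hWV))
      · rw [Finset.card_insert_of_notMem, hScard]
        · have h1 : w' c = w c - 1 := by simp [hw']
          have h2 : 1 ≤ w c := by cases c <;> omega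
          omega
        · intro hvS
          exact (Finset.notMem_erase v V) (hAW (hSA hvS))
      · intro e he hcard
        by_cases hve : v ∈ e
        · have herase : e.erase v ⊆ S := by
            intro x hx
            have hx' := he (Finset.mem_of_mem_erase hx)
            rcases Finset.mem_insert.mp hx' with h | h
            · exact absurd h (Finset.ne_of_mem_erase hx)
            · exact h
          have hc1 : (e.erase v).card = 1 := by
            rw [Finset.card_erase_of_mem hve, hcard]
          obtain ⟨y, hy⟩ := Finset.card_eq_one.mp hc1
          have hyS : y ∈ S := herase (hy ▸ Finset.mem_singleton_self y)
          have : e = {v, y} := by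
            rw [← Finset.insert_erase hve, hy]
          rw [this]
          have := hSA hyS
          rw [hA, Finset.mem_filter] at this
          exact this.2
        · have : e ⊆ S := fun x hx => by
            rcases Finset.mem_insert.mp (he hx) with h | h
            · exact absurd (h ▸ hx) hve
            · exact h
          exact hclique e this hcard
    · refine ⟨c, S, hSA.trans (hAW.trans hWV), ?_, hclique⟩
      rw [hScard, hw']
      simp [hcb]


lemma refineList (χ : Finset α → Bool) (x : α) :
    ∀ (l : List α) (W : Finset α),
      ∃ W' : Finset α, W' ⊆ W ∧ W.card ≤ 2 ^ l.length * W'.card ∧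
        ∀ a ∈ l, ∀ y ∈ W', ∀ z ∈ W', χ {a, x, y} = χ {a, x, z} := by
  intro l
  induction l with
  | nil =>
    intro W
    exact ⟨W, le_refl _, by simp, by simp⟩
  | cons a l ih =>
    intro W
    obtain ⟨b, hb0⟩ := exists_big_half W (fun y => χ {a, x, y})
    have hb : W.card ≤ 2 * (W.filter (fun y => χ {a, x, y} = b)).card := hb0
    set W1 := W.filter (fun y => χ {a, x, y} = b) with hW1
    obtain ⟨W', hsub, hcard, hprop⟩ := ih W1
    refine ⟨W', hsub.trans (Finset.filter_subset _ _), ?_, ?_⟩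
    · calc W.card ≤ 2 * W1.card := hb
        _ ≤ 2 * (2 ^ l.length * W'.card) := by
            exact Nat.mul_le_mul_left 2 hcard
        _ = 2 ^ (a :: l).length * W'.card := by
            rw [List.length_cons, pow_succ]
            ring
    · intro a' ha' y hy z hz
      rcases List.mem_cons.mp ha' with h | h
      · subst h
        have h1 : χ {a', x, y} = b := (Finset.mem_filter.mp (hsub hy)).2
        have h2 : χ {a', x, z} = b := (Finset.mem_filter.mp (hsub hz)).2
        rw [h1, h2]
      · exact hprop a' h y hy z hz

/-- Invariant for the Erdos-Rado construction. `ys` is the list of chosen points,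
newest at the head, `V` the current live set. -/
def ERInv (χ : Finset α → Bool) (ys : List α) (V : Finset α) : Prop :=
  ys.Nodup ∧ (∀ x ∈ ys, x ∉ V) ∧
  ∀ i j : Fin ys.length, (j : ℕ) < (i : ℕ) → ∀ y z : α,
    (y ∈ V ∨ ∃ k : Fin ys.length, (k : ℕ) < (j : ℕ) ∧ y = ys.get k) →
    (z ∈ V ∨ ∃ k : Fin ys.length, (k : ℕ) < (j : ℕ) ∧ z = ys.get k) →
    χ {ys.get i, ys.get j, y} = χ {ys.get i, ys.get j, z}

lemma ERInv_step (χ : Finset α → Bool) {ys : List α} {V : Finset α}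
    (hinv : ERInv χ ys V) (x : α) (hx : x ∈ V) :
    ∃ V' : Finset α, V.card ≤ 2 ^ ys.length * V'.card + 1 ∧ ERInv χ (x :: ys) V' := by
  obtain ⟨W', hsub, hcard, hprop⟩ := refineList χ x ys (V.erase x)
  obtain ⟨hnd, hdisj, hmain⟩ := hinv
  have hW'V : ∀ w ∈ W', w ∈ V := fun w hw => Finset.mem_of_mem_erase (hsub hw)
  refine ⟨W', ?_, ?_, ?_, ?_⟩
  · have h1 : (V.erase x).card = V.card - 1 := Finset.card_erase_of_mem hx
    omega
  · exact List.nodup_cons.mpr ⟨fun hmem => hdisj x hmem hx, hnd⟩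
  · intro a ha
    rcases List.mem_cons.mp ha with h | h
    · subst h
      intro haW
      exact (Finset.notMem_erase a V) (hsub haW)
    · intro haW
      exact hdisj a h (hW'V a haW)
  · intro i j
    induction j using Fin.cases with
    | zero =>
      induction i using Fin.cases with
      | zero => intro h; omega
      | succ i =>
        intro _ y z hy hz
        have hy' : y ∈ W' := by
          rcases hy with h | ⟨k, hk, _⟩
          · exact h
          · exact absurd hk (by simp)
        have hz' : z ∈ W' := by
          rcases hz with h | ⟨k, hk, _⟩
          · exact h
          · exact absurd hk (by simp)
        simp only [List.get_cons_succ, List.get_cons_zero]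
        exact hprop (ys.get i) (List.get_mem ys i) y hy' z hz'
    | succ j =>
      induction i using Fin.cases with
      | zero => intro h; simp at h
      | succ i =>
        intro hji y z hy hz
        have hji' : (j : ℕ) < (i : ℕ) := by
          simpa using hji
        have conv : ∀ w : α,
            (w ∈ W' ∨ ∃ k : Fin (x :: ys).length, (k : ℕ) < (j.succ : ℕ) ∧ w = (x :: ys).get k) →
            (w ∈ V ∨ ∃ k : Fin ys.length, (k : ℕ) < (j : ℕ) ∧ w = ys.get k) := by
          intro w hw
          rcases hw with h | ⟨k, hk, hwk⟩
          · exact Or.inl (hW'V w h)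
          · induction k using Fin.cases with
            | zero =>
              left
              simp only [List.get_cons_zero] at hwk
              rw [hwk]
              exact hx
            | succ k =>
              right
              refine ⟨k, by simpa using hk, by simpa using hwk⟩
        have := hmain i j hji' y z (conv y hy) (conv z hz)
        simpa using this

/-- Sizes needed for the Erdos-Rado recursion. -/
def needSize : ℕ → ℕ → ℕ
  | _, 0 => 0
  | t, r+1 => 2 ^ t * needSize (t+1) r + 1

lemma needSize_le : ∀ (r t : ℕ), needSize t r ≤ 2 ^ ((t + r) * r) := by
  intro r
  induction r with
  | zero => intro t; simp [needSize]
  | succ r ih =>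
    intro t
    have h1 : (1:ℕ) ≤ 2 ^ (t + (t + 1 + r) * r) := Nat.one_le_two_pow
    calc needSize t (r+1) = 2 ^ t * needSize (t+1) r + 1 := rfl
      _ ≤ 2 ^ t * 2 ^ ((t + 1 + r) * r) + 1 :=
          Nat.add_le_add_right (Nat.mul_le_mul_left _ (ih (t+1))) 1
      _ = 2 ^ (t + (t + 1 + r) * r) + 1 := by rw [pow_add]
      _ ≤ 2 ^ (t + (t + 1 + r) * r) + 2 ^ (t + (t + 1 + r) * r) := by omega
      _ = 2 ^ (t + (t + 1 + r) * r + 1) := by rw [pow_succ]; ring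
      _ ≤ 2 ^ ((t + (r + 1)) * (r + 1)) := Nat.pow_le_pow_right (by norm_num) (by nlinarith)

lemma ER_rec (χ : Finset α → Bool) :
    ∀ (r : ℕ) (ys : List α) (V : Finset α), ERInv χ ys V →
      needSize ys.length r ≤ V.card →
      ∃ zs : List α, zs.length = r ∧ ∃ V', ERInv χ (zs ++ ys) V' := by
  intro r
  induction r with
  | zero =>
    intro ys V h _
    exact ⟨[], rfl, V, h⟩
  | succ r ih =>
    intro ys V hinv hsize
    simp only [needSize] at hsize
    have hpos : 0 < V.card := by omega
    obtain ⟨x, hx⟩ := Finset.card_pos.mp hpos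
    obtain ⟨V', hcard, hinv'⟩ := ERInv_step χ hinv x hx
    have hsize' : needSize (x :: ys).length r ≤ V'.card := by
      have h1 : 2 ^ ys.length * needSize (ys.length + 1) r ≤ 2 ^ ys.length * V'.card := by
        omega
      have h2 := Nat.le_of_mul_le_mul_left h1 (Nat.pow_pos (by norm_num))
      simpa using h2
    obtain ⟨zs, hlen, V'', hinv''⟩ := ih (x :: ys) V' hinv' hsize'
    refine ⟨zs ++ [x], by simp [hlen], V'', ?_⟩
    rwa [List.append_cons] at hinv''


lemma pair_insert (a b c : α) : (insert c {a, b} : Finset α) = {a, b, c} := by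
  ext x
  simp
  tauto

lemma triple_comm (a b c : α) : ({a, b, c} : Finset α) = ({c, b, a} : Finset α) := by
  ext x
  simp
  tauto

/-- Membership in the Ramsey set for the upper bound. -/
lemma upper_mem (n N : ℕ) (hN : needSize 0 (2 ^ (n + n)) ≤ N) :
    ∀ χ : Finset (Fin N) → Bool, monoClique 3 χ true n ∨ monoClique 3 χ false n := by
  intro χ
  have hinv0 : ERInv χ [] Finset.univ :=
    ⟨List.nodup_nil, by simp, fun i => Fin.elim0 i⟩
  have hcard0 : needSize ([] : List (Fin N)).length (2 ^ (n + n)) ≤ (Finset.univ : Finset (Fin N)).card := by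
    simpa [Finset.card_univ] using hN
  obtain ⟨zs, hlen, V', hinv⟩ := ER_rec χ (2 ^ (n + n)) [] Finset.univ hinv0 hcard0
  rw [List.append_nil] at hinv
  obtain ⟨hnd, _, hmain⟩ := hinv
  have hinj : Function.Injective zs.get := List.nodup_iff_injective_get.mp hnd
  have hm1 : 0 < zs.length := by
    rw [hlen]
    exact Nat.pow_pos (by norm_num)
  set g : Fin zs.length → Fin N := zs.get with hg
  set χ₂ : Finset (Fin N) → Bool := fun e => χ (insert (g ⟨0, hm1⟩) e) with hχ₂
  -- the key property of the pair coloring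
  have key : ∀ i j k : Fin zs.length, (k : ℕ) < (j : ℕ) → (j : ℕ) < (i : ℕ) →
      χ {g i, g j, g k} = χ₂ {g i, g j} := by
    intro i j k hkj hji
    have h0j : ((⟨0, hm1⟩ : Fin zs.length) : ℕ) < (j : ℕ) := by
      simp only [Fin.val_mk]
      omega
    have h1 := hmain i j hji (g k) (g ⟨0, hm1⟩)
      (Or.inr ⟨k, hkj, rfl⟩) (Or.inr ⟨⟨0, hm1⟩, h0j, rfl⟩)
    calc χ {g i, g j, g k} = χ {g i, g j, g ⟨0, hm1⟩} := h1
      _ = χ₂ {g i, g j} := (congrArg χ (pair_insert (g i) (g j) (g ⟨0, hm1⟩))).symm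
  -- apply graph Ramsey to χ₂ on the vertex set of zs
  have hVcard : 2 ^ (n + n) ≤ zs.toFinset.card := by
    rw [List.toFinset_card_of_nodup hnd, hlen]
  obtain ⟨c, S, hSV, hScard, hclique⟩ :=
    graphRamsey χ₂ (n + n) (fun _ => n) zs.toFinset (by simp) (by simpa using hVcard)
  have hgoal : monoClique 3 χ c n := by
    refine ⟨S, by cases c <;> simpa using hScard, ?_⟩
    intro e he hecard
    -- pull back to indices
    set I : Finset (Fin zs.length) := Finset.univ.filter (fun i => g i ∈ e) with hI
    have hIe : I.image g = e := by
      apply Finset.Subset.antisymm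
      · intro a ha
        obtain ⟨i, hi, rfl⟩ := Finset.mem_image.mp ha
        exact (Finset.mem_filter.mp hi).2
      · intro a ha
        have : a ∈ zs := List.mem_toFinset.mp (hSV (he ha))
        obtain ⟨i, hi⟩ := List.mem_iff_get.mp this
        exact Finset.mem_image.mpr ⟨i, Finset.mem_filter.mpr ⟨Finset.mem_univ _,
          by rw [hg, hi]; exact ha⟩, by rw [hg, hi]⟩
    have hI3 : I.card = 3 := by
      rw [← hecard, ← hIe, Finset.card_image_of_injective _ hinj]
    set f := I.orderIsoOfFin hI3 with hf
    set p : Fin zs.length := (f 0).1 with hp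
    set q : Fin zs.length := (f 1).1 with hq
    set r : Fin zs.length := (f 2).1 with hr
    have hpq : p < q := Subtype.coe_lt_coe.mpr (f.lt_iff_lt.mpr (by decide))
    have hqr : q < r := Subtype.coe_lt_coe.mpr (f.lt_iff_lt.mpr (by decide))
    have hIpqr : ({p, q, r} : Finset (Fin zs.length)) = I := by
      apply Finset.eq_of_subset_of_card_le
      · intro x hx
        rcases Finset.mem_insert.mp hx with h | hx
        · exact h ▸ (f 0).2
        rcases Finset.mem_insert.mp hx with h | hx
        · exact h ▸ (f 1).2
        · exact (Finset.mem_singleton.mp hx) ▸ (f 2).2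
      · rw [hI3]
        rw [Finset.card_insert_of_notMem (by simp; constructor <;> intro h <;> omega),
          Finset.card_insert_of_notMem (by simp; intro h; omega),
          Finset.card_singleton]
    have he3 : e = {g p, g q, g r} := by
      rw [← hIe, ← hIpqr]
      simp [Finset.image_insert]
    have hch : χ e = χ₂ {g r, g q} := by
      rw [he3, triple_comm]
      exact key r q p hpq hqr
    rw [hch]
    apply hclique
    · intro x hx
      rcases Finset.mem_insert.mp hx with h | hx
      · subst h
        exact he (he3 ▸ (by simp : g r ∈ ({g p, g q, g r} : Finset (Fin N))))
      · rw [Finset.mem_singleton.mp hx]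
        exact he (he3 ▸ (by simp : g q ∈ ({g p, g q, g r} : Finset (Fin N))))
    · exact Finset.card_pair (fun h => absurd (hinj h) (ne_of_gt hqr))
  cases c
  · exact Or.inr hgoal
  · exact Or.inl hgoal


/-- Counting colorings that are constant on a prescribed family of sets. -/
lemma card_filter_forall (B : ℕ) (A : Finset (Finset (Fin B))) (c : Bool) :
    (Finset.univ.filter (fun χ : Finset (Fin B) → Bool => ∀ e ∈ A, χ e = c)).card
      = 2 ^ (2 ^ B - A.card) := by
  classical
  have hset : (Finset.univ.filter (fun χ : Finset (Fin B) → Bool => ∀ e ∈ A, χ e = c))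
      = Fintype.piFinset (fun e : Finset (Fin B) =>
          if e ∈ A then ({c} : Finset Bool) else Finset.univ) := by
    ext χ
    simp only [Finset.mem_filter, Finset.mem_univ, true_and, Fintype.mem_piFinset]
    constructor
    · intro h e
      by_cases he : e ∈ A
      · simp [he, h e he]
      · simp [he]
    · intro h e he
      have := h e
      simpa [he] using this
  rw [hset, Fintype.card_piFinset]
  have hprod : ∀ e : Finset (Fin B),
      (if e ∈ A then ({c} : Finset Bool) else Finset.univ).card
        = if e ∈ A then 1 else 2 := by
    intro e
    split <;> simp
  rw [Finset.prod_congr rfl (fun e _ => hprod e), Finset.prod_ite]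
  simp only [Finset.prod_const, one_pow, one_mul]
  congr 1
  rw [Finset.filter_not, Finset.card_sdiff_of_subset (Finset.filter_subset _ _)]
  congr 1
  · simp [Finset.card_univ, Fintype.card_finset]
  · congr 1
    exact Finset.filter_univ_mem A

/-- Existence of a coloring without monochromatic `n`-cliques, by counting. -/
lemma exists_good_coloring (n B : ℕ)
    (hchoose : 2 * B.choose n < 2 ^ (n.choose 3))
    (hTD : n.choose 3 ≤ 2 ^ B) :
    ∃ χ : Finset (Fin B) → Bool, ¬ monoClique 3 χ true n ∧ ¬ monoClique 3 χ false n := by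
  classical
  set Bad : Finset (Finset (Fin B) → Bool) :=
    Finset.univ.filter (fun χ => monoClique 3 χ true n ∨ monoClique 3 χ false n) with hBad
  have hsub : Bad ⊆ (Finset.univ.powersetCard n ×ˢ (Finset.univ : Finset Bool)).biUnion
      (fun Sc => Finset.univ.filter
        (fun χ : Finset (Fin B) → Bool => ∀ e ∈ Sc.1.powersetCard 3, χ e = Sc.2)) := by
    intro χ hχ
    rw [hBad, Finset.mem_filter] at hχ
    have : ∃ c : Bool, monoClique 3 χ c n := by
      rcases hχ.2 with h | h
      · exact ⟨true, h⟩
      · exact ⟨false, h⟩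
    obtain ⟨c, S, hScard, hSprop⟩ := this
    apply Finset.mem_biUnion.mpr
    refine ⟨(S, c), ?_, ?_⟩
    · rw [Finset.mem_product]
      exact ⟨Finset.mem_powersetCard.mpr ⟨Finset.subset_univ _, hScard⟩, Finset.mem_univ _⟩
    · rw [Finset.mem_filter]
      refine ⟨Finset.mem_univ _, ?_⟩
      intro e hee
      obtain ⟨hsub', hcard'⟩ := Finset.mem_powersetCard.mp hee
      exact hSprop e hsub' hcard'
  have hcount : Bad.card ≤ (B.choose n * 2) * 2 ^ (2 ^ B - n.choose 3) := by
    calc Bad.card ≤ ∑ Sc ∈ (Finset.univ.powersetCard n ×ˢ (Finset.univ : Finset Bool)),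
        (Finset.univ.filter
          (fun χ : Finset (Fin B) → Bool => ∀ e ∈ Sc.1.powersetCard 3, χ e = Sc.2)).card :=
          (Finset.card_le_card hsub).trans (Finset.card_biUnion_le)
      _ = ∑ Sc ∈ (Finset.univ.powersetCard n ×ˢ (Finset.univ : Finset Bool)),
          2 ^ (2 ^ B - n.choose 3) := by
          apply Finset.sum_congr rfl
          intro Sc hSc
          rw [Finset.mem_product] at hSc
          have hcardS : Sc.1.card = n := (Finset.mem_powersetCard.mp hSc.1).2
          rw [card_filter_forall B (Sc.1.powersetCard 3) Sc.2,
            Finset.card_powersetCard, hcardS]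
      _ = (B.choose n * 2) * 2 ^ (2 ^ B - n.choose 3) := by
          rw [Finset.sum_const, Finset.card_product, smul_eq_mul,
            Finset.card_powersetCard, Finset.card_univ, Finset.card_univ,
            Fintype.card_fin, Fintype.card_bool]
  have htotal : Bad.card < Fintype.card (Finset (Fin B) → Bool) := by
    have h1 : Fintype.card (Finset (Fin B) → Bool) = 2 ^ (2 ^ B) := by
      rw [Fintype.card_fun, Fintype.card_bool, Fintype.card_finset, Fintype.card_fin]
    have h2 : (2:ℕ) ^ (2 ^ B) = 2 ^ (n.choose 3) * 2 ^ (2 ^ B - n.choose 3) := by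
      rw [← pow_add]
      congr 1
      omega
    rw [h1, h2]
    apply lt_of_le_of_lt hcount
    exact Nat.mul_lt_mul_of_pos_right (by omega) (Nat.pow_pos (by norm_num))
  have hne : ∃ χ : Finset (Fin B) → Bool, χ ∉ Bad := by
    by_contra hcon
    push_neg at hcon
    have : Bad = Finset.univ := Finset.eq_univ_iff_forall.mpr hcon
    rw [this, Finset.card_univ] at htotal
    exact lt_irrefl _ htotal
  obtain ⟨χ, hχ⟩ := hne
  rw [hBad, Finset.mem_filter] at hχ
  push_neg at hχ
  exact ⟨χ, hχ (Finset.mem_univ _)⟩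

/-- The Ramsey set is upward closed. -/
lemma ramseySet_mono {n M N : ℕ} (h : M ≤ N)
    (hM : ∀ χ : Finset (Fin M) → Bool, monoClique 3 χ true n ∨ monoClique 3 χ false n) :
    ∀ χ : Finset (Fin N) → Bool, monoClique 3 χ true n ∨ monoClique 3 χ false n := by
  intro χ
  set f : Fin M ↪ Fin N := Fin.castLEEmb h with hf
  set χ' : Finset (Fin M) → Bool := fun e => χ (e.map f) with hχ'
  have lift : ∀ c, monoClique 3 χ' c n → monoClique 3 χ c n := by
    intro c ⟨S, hScard, hSprop⟩
    refine ⟨S.map f, by rw [Finset.card_map]; exact hScard, ?_⟩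
    intro e he hecard
    obtain ⟨u, hu, rfl⟩ := Finset.subset_map_iff.mp he
    have : χ' u = c := hSprop u hu (by rwa [Finset.card_map] at hecard)
    exact this
  rcases hM χ' with hc | hc
  · exact Or.inl (lift true hc)
  · exact Or.inr (lift false hc)


lemma arith1 (n : ℕ) (hn : 400 ≤ n) : n ^ 2 / 100 * n + 2 ≤ n.choose 3 := by
  -- first: n^2/100 * n ≤ n^3/100
  have h1 : n ^ 2 / 100 * n ≤ n ^ 3 / 100 := by
    rw [Nat.le_div_iff_mul_le (by norm_num : (0:ℕ) < 100)]
    calc n ^ 2 / 100 * n * 100 = n ^ 2 / 100 * 100 * n := by ring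
      _ ≤ n ^ 2 * n := Nat.mul_le_mul_right n (Nat.div_mul_le_self _ _)
      _ = n ^ 3 := by ring
  set q := n ^ 3 / 100 with hq
  have h100q : 100 * q ≤ n ^ 3 := by
    rw [hq, mul_comm]
    exact Nat.div_mul_le_self _ _
  obtain ⟨a, rfl⟩ : ∃ a, n = a + 2 := ⟨n - 2, by omega⟩
  have ha : 398 ≤ a := by omega
  have hdf : (a + 2).descFactorial 3 = a * ((a + 1) * (a + 2)) := by
    show (a + 2 - 2) * ((a + 2 - 1) * ((a + 2 - 0) * 1)) = _
    rw [show a + 2 - 2 = a from by omega, show a + 2 - 1 = a + 1 from by omega,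
      show a + 2 - 0 = a + 2 from by omega]
    ring
  have hchoose6 : (a + 2).descFactorial 3 = 6 * (a + 2).choose 3 := by
    rw [Nat.descFactorial_eq_factorial_mul_choose]
    norm_num [Nat.factorial]
  have hkey : (q + 2) * 6 ≤ a * ((a + 1) * (a + 2)) := by
    have hcube : (a + 2) ^ 3 = a^3 + 6*a^2 + 12*a + 8 := by ring
    nlinarith [h100q, ha, sq_nonneg a]
  have : (q + 2) * 6 ≤ 6 * (a + 2).choose 3 := by
    rw [← hchoose6, hdf]
    exact hkey
  have hq2 : q + 2 ≤ (a + 2).choose 3 := by omega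
  omega

lemma arith2 (n : ℕ) (hn : 400 ≤ n) : n.choose 3 ≤ 2 ^ (2 ^ (n ^ 2 / 100)) := by
  have h1 : n.choose 3 ≤ n ^ 3 := Nat.choose_le_pow n 3
  have h2 : n ^ 3 ≤ (2 ^ n) ^ 3 :=
    Nat.pow_le_pow_left (le_of_lt (Nat.lt_two_pow_self)) 3
  have h4 : n * 3 ≤ n ^ 2 / 100 := by
    rw [Nat.le_div_iff_mul_le (by norm_num : (0:ℕ) < 100)]
    nlinarith
  have h5 : (2:ℕ) ^ (n * 3) ≤ 2 ^ (n ^ 2 / 100) :=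
    Nat.pow_le_pow_right (by norm_num) h4
  have h6 : (2:ℕ) ^ (n ^ 2 / 100) ≤ 2 ^ (2 ^ (n ^ 2 / 100)) :=
    Nat.pow_le_pow_right (by norm_num) (le_of_lt (Nat.lt_two_pow_self))
  calc n.choose 3 ≤ n ^ 3 := h1
    _ ≤ (2 ^ n) ^ 3 := h2
    _ = 2 ^ (n * 3) := by rw [← pow_mul]
    _ ≤ 2 ^ (n ^ 2 / 100) := h5
    _ ≤ 2 ^ (2 ^ (n ^ 2 / 100)) := h6

/-- Lower bound: every element of the Ramsey set is large. -/
lemma lower_bound (n : ℕ) (hn : 400 ≤ n) (N : ℕ)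
    (hN : ∀ χ : Finset (Fin N) → Bool, monoClique 3 χ true n ∨ monoClique 3 χ false n) :
    2 ^ (n ^ 2 / 100) < N := by
  set B := 2 ^ (n ^ 2 / 100) with hB
  by_contra hcon
  push_neg at hcon
  have hBmem := ramseySet_mono hcon hN
  have hchoose : 2 * B.choose n < 2 ^ (n.choose 3) := by
    have h1 : B.choose n ≤ B ^ n := Nat.choose_le_pow B n
    have h2 : B ^ n = 2 ^ (n ^ 2 / 100 * n) := by rw [hB, ← pow_mul]
    have h3 : 2 * B.choose n ≤ 2 ^ (n ^ 2 / 100 * n + 1) := by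
      rw [pow_succ]
      calc 2 * B.choose n ≤ 2 * B ^ n := Nat.mul_le_mul_left 2 h1
        _ = 2 ^ (n ^ 2 / 100 * n) * 2 := by rw [h2]; ring
    have h4 : n ^ 2 / 100 * n + 1 < n.choose 3 := by
      have := arith1 n hn
      omega
    calc 2 * B.choose n ≤ 2 ^ (n ^ 2 / 100 * n + 1) := h3
      _ < 2 ^ (n.choose 3) := Nat.pow_lt_pow_right (by norm_num) h4
  have hTD : n.choose 3 ≤ 2 ^ B := arith2 n hn
  obtain ⟨χ, hχ1, hχ2⟩ := exists_good_coloring n B hchoose hTD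
  rcases hBmem χ with h | h
  · exact hχ1 h
  · exact hχ2 h

/-- Upper bound: membership of a double exponential in the Ramsey set. -/
lemma upper_bound (n : ℕ) :
    ∀ χ : Finset (Fin (2 ^ 2 ^ (4 * n))) → Bool,
      monoClique 3 χ true n ∨ monoClique 3 χ false n := by
  apply upper_mem
  calc needSize 0 (2 ^ (n + n)) ≤ 2 ^ ((0 + 2 ^ (n + n)) * 2 ^ (n + n)) :=
      needSize_le _ _
    _ = 2 ^ (2 ^ (4 * n)) := by
      congr 1
      rw [zero_add, ← pow_add]
      congr 1
      omega

end Stmt9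

theorem stmt_9 :
    ∃ c₁ c₂ : ℝ, 0 < c₁ ∧ 0 < c₂ ∧ ∀ᶠ n : ℕ in atTop,
      (2:ℝ) ^ (c₁ * (n:ℝ) ^ 2) < (ramsey 3 n n : ℝ) ∧
      (ramsey 3 n n : ℝ) < (2:ℝ) ^ ((2:ℝ) ^ (c₂ * n)) := by
  refine ⟨1/200, 5, by norm_num, by norm_num, ?_⟩
  filter_upwards [eventually_ge_atTop 400] with n hn
  have hmem : ramsey 3 n n ∈ {N | ∀ χ : Finset (Fin N) → Bool,
      monoClique 3 χ true n ∨ monoClique 3 χ false n} :=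
    Nat.sInf_mem ⟨2 ^ 2 ^ (4 * n), Stmt9.upper_bound n⟩
  have hle : ramsey 3 n n ≤ 2 ^ 2 ^ (4 * n) := Nat.sInf_le (Stmt9.upper_bound n)
  have hlow : 2 ^ (n ^ 2 / 100) < ramsey 3 n n := Stmt9.lower_bound n hn _ hmem
  constructor
  · have hcast : (((2:ℕ) ^ (n ^ 2 / 100) : ℕ) : ℝ) < (ramsey 3 n n : ℝ) := by
      exact_mod_cast hlow
    refine lt_of_le_of_lt ?_ hcast
    have e1 : (((2:ℕ) ^ (n ^ 2 / 100) : ℕ) : ℝ) = (2:ℝ) ^ (((n ^ 2 / 100 : ℕ)) : ℝ) := by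
      rw [Real.rpow_natCast]
      push_cast
      ring
    rw [e1]
    rw [Real.rpow_le_rpow_left_iff (by norm_num : (1:ℝ) < 2)]
    have hN : n ^ 2 ≤ 200 * (n ^ 2 / 100) := by
      have h1 : 400 * 400 ≤ n * n := Nat.mul_le_mul hn hn
      have h2 : n ^ 2 = n * n := sq n
      omega
    have hN' : (n:ℝ) ^ 2 ≤ 200 * ((n ^ 2 / 100 : ℕ) : ℝ) := by
      exact_mod_cast hN
    linarith
  · have h45 : (2:ℕ) ^ (4 * n) < 2 ^ (5 * n) :=
      Nat.pow_lt_pow_right one_lt_two (by omega)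
    have hu1 : ramsey 3 n n < 2 ^ 2 ^ (5 * n) :=
      lt_of_le_of_lt hle (Nat.pow_lt_pow_right one_lt_two h45)
    have e2 : ((2 ^ 2 ^ (5 * n) : ℕ) : ℝ) = (2:ℝ) ^ ((2:ℝ) ^ ((5:ℝ) * n)) := by
      rw [show ((5:ℝ) * n) = ((5 * n : ℕ) : ℝ) by push_cast; ring, Real.rpow_natCast,
        show ((2:ℝ) ^ (5 * n)) = ((2 ^ (5 * n) : ℕ) : ℝ) by push_cast; ring,
        Real.rpow_natCast]
      push_cast
      ring
    rw [← e2]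
    exact_mod_cast hu1
end

section
/- There is an absolute constant c > 0 such that for all sufficiently large n, the four-color Ramsey number satisfies r_3(n; 4) > 2^{2^{cn}}. -/
open Filter

lemma nat_xor_eq_zero {a b : ℕ} : a ^^^ b = 0 ↔ a = b := by
  constructor
  · intro h; apply Nat.eq_of_testBit_eq; intro i
    have := congrArg (fun x => Nat.testBit x i) h
    simp only [Nat.testBit_xor] at this
    revert this; cases a.testBit i <;> cases b.testBit i <;> simp
  · rintro rfl; exact Nat.xor_self a

/-- most significant differing bit -/
def DD (a b : ℕ) : ℕ := Nat.log 2 (a ^^^ b)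

lemma log2_eq_of_bits {x d : ℕ} (h1 : x.testBit d = true)
    (h2 : ∀ j, d < j → x.testBit j = false) : Nat.log 2 x = d := by
  have hge : 2 ^ d ≤ x := Nat.ge_two_pow_of_testBit h1
  have hlt : x < 2 ^ (d + 1) := by
    by_contra h
    obtain ⟨j, hj, hjt⟩ := Nat.exists_ge_and_testBit_of_ge_two_pow (Nat.le_of_not_lt h)
    rw [h2 j hj] at hjt; exact Bool.false_ne_true hjt
  exact Nat.log_eq_of_pow_le_of_lt_pow hge hlt

lemma DD_eq_of {a b d : ℕ} (hne : a.testBit d ≠ b.testBit d)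
    (hagree : ∀ j, d < j → a.testBit j = b.testBit j) : DD a b = d := by
  apply log2_eq_of_bits
  · rw [Nat.testBit_xor]
    revert hne; cases a.testBit d <;> cases b.testBit d <;> simp
  · intro j hj
    rw [Nat.testBit_xor, hagree j hj]
    cases b.testBit j <;> simp

lemma DD_symm (a b : ℕ) : DD a b = DD b a := by unfold DD; rw [Nat.xor_comm]

lemma DD_bits {a b : ℕ} (h : a < b) :
    (a.testBit (DD a b) = false ∧ b.testBit (DD a b) = true) ∧
      ∀ j, DD a b < j → a.testBit j = b.testBit j := by
  have hx : a ^^^ b ≠ 0 := by rw [Ne, nat_xor_eq_zero]; omega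
  obtain ⟨h1, h2⟩ : (a ^^^ b).testBit (DD a b) = true ∧
      ∀ j, DD a b < j → (a ^^^ b).testBit j = false := by
    obtain ⟨i, hi, hib⟩ := Nat.exists_most_significant_bit hx
    have : Nat.log 2 (a ^^^ b) = i := log2_eq_of_bits hi hib
    unfold DD; rw [this]; exact ⟨hi, hib⟩
  have hagree : ∀ j, DD a b < j → a.testBit j = b.testBit j := by
    intro j hj
    have := h2 j hj
    rw [Nat.testBit_xor] at this
    revert this; cases a.testBit j <;> cases b.testBit j <;> simp
  rw [Nat.testBit_xor] at h1
  have hne : a.testBit (DD a b) ≠ b.testBit (DD a b) := by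
    revert h1; cases a.testBit (DD a b) <;> cases b.testBit (DD a b) <;> simp
  refine ⟨?_, hagree⟩
  rcases hb : b.testBit (DD a b) with _ | _
  · rcases ha : a.testBit (DD a b) with _ | _
    · rw [ha, hb] at hne; simp at hne
    · exfalso
      have : b < a := Nat.lt_of_testBit (DD a b) hb ha
        (fun j hj => (hagree j hj).symm)
      omega
  · rcases ha : a.testBit (DD a b) with _ | _
    · exact ⟨rfl, rfl⟩
    · rw [ha, hb] at hne; simp at hne

lemma DD_lt {a b n : ℕ} (ha : a < 2 ^ n) (hb : b < 2 ^ n) (hab : a ≠ b) : DD a b < n := by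
  have hx : a ^^^ b ≠ 0 := by rw [Ne, nat_xor_eq_zero]; exact hab
  exact Nat.log_lt_of_lt_pow hx (Nat.xor_lt_two_pow ha hb)

lemma DD_max {a b c : ℕ} (h1 : a < b) (h2 : b < c) :
    DD a b ≠ DD b c ∧ DD a c = max (DD a b) (DD b c) := by
  obtain ⟨⟨ha1, hb1⟩, hag1⟩ := DD_bits h1
  obtain ⟨⟨hb2, hc2⟩, hag2⟩ := DD_bits h2
  set d1 := DD a b with hd1
  set d2 := DD b c with hd2
  have hne : d1 ≠ d2 := by
    intro h; rw [h] at hb1; rw [hb1] at hb2; simp at hb2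
  refine ⟨hne, ?_⟩
  rcases lt_or_gt_of_ne hne with hlt | hgt
  · rw [max_eq_right hlt.le]
    apply DD_eq_of
    · rw [hag1 d2 hlt, hb2, hc2]; simp
    · intro j hj; rw [hag1 j (hlt.trans hj), hag2 j hj]
  · rw [max_eq_left hgt.le]
    apply DD_eq_of
    · rw [← hag2 d1 hgt, ha1, hb1]; simp
    · intro j hj; rw [hag1 j hj, hag2 j (hgt.trans hj)]

def stepColor (g : ℕ → ℕ → Fin 2) (x y z : ℕ) : Fin 4 :=
  ⟨(if DD x y < DD y z then 0 else 2) + (g (DD x y) (DD y z)).val, by split <;> omega⟩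

lemma stepColor_inj {g : ℕ → ℕ → Fin 2} {x y z x' y' z' : ℕ}
    (h : stepColor g x y z = stepColor g x' y' z') :
    ((DD x y < DD y z) ↔ (DD x' y' < DD y' z')) ∧
      g (DD x y) (DD y z) = g (DD x' y') (DD y' z') := by
  have hv := congrArg Fin.val h
  simp only [stepColor] at hv
  have ha := (g (DD x y) (DD y z)).isLt
  have hb := (g (DD x' y') (DD y' z')).isLt
  constructor
  · split_ifs at hv <;> first | tauto | omega
  · apply Fin.ext; split_ifs at hv <;> omega

def stepChi {N : ℕ} (g : ℕ → ℕ → Fin 2) (e : Finset (Fin N)) : Fin 4 :=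
  if h : e.card = 3 then
    have h1 : e.Nonempty := Finset.card_pos.mp (by omega)
    have h2 : (e.erase (e.min' h1)).Nonempty := by
      rw [← Finset.card_pos, Finset.card_erase_of_mem (e.min'_mem h1), h]; omega
    stepColor g (e.min' h1) ((e.erase (e.min' h1)).min' h2) ((e.erase (e.min' h1)).max' h2)
  else 0

lemma triple_card {N : ℕ} {u v w : Fin N} (h1 : u < v) (h2 : v < w) :
    ({u, v, w} : Finset (Fin N)).card = 3 :=
  Finset.card_eq_three.mpr ⟨u, v, w, ne_of_lt h1, ne_of_lt (h1.trans h2), ne_of_lt h2, rfl⟩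

lemma stepChi_triple {N : ℕ} (g : ℕ → ℕ → Fin 2) {u v w : Fin N} (h1 : u < v) (h2 : v < w) :
    stepChi g {u, v, w} = stepColor g (u : ℕ) (v : ℕ) (w : ℕ) := by
  have hc := triple_card h1 h2
  rw [stepChi, dif_pos hc]
  have h1' : ({u, v, w} : Finset (Fin N)).Nonempty := Finset.card_pos.mp (by omega)
  have hmin : ({u, v, w} : Finset (Fin N)).min' h1' = u := by
    apply le_antisymm
    · exact Finset.min'_le _ _ (by simp)
    · apply Finset.le_min'
      intro y hy
      simp only [Finset.mem_insert, Finset.mem_singleton] at hy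
      rcases hy with rfl | rfl | rfl
      · exact le_refl _
      · exact h1.le
      · exact (h1.trans h2).le
  have herase : ({u, v, w} : Finset (Fin N)).erase u = {v, w} := by
    rw [Finset.erase_insert]
    simp only [Finset.mem_insert, Finset.mem_singleton]
    push_neg
    exact ⟨ne_of_lt h1, ne_of_lt (h1.trans h2)⟩
  simp only [hmin, herase]
  have hvw : ({v, w} : Finset (Fin N)).min' (by simp) = v := by
    apply le_antisymm
    · exact Finset.min'_le _ _ (by simp)
    · apply Finset.le_min'
      intro y hy
      simp only [Finset.mem_insert, Finset.mem_singleton] at hy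
      rcases hy with rfl | rfl
      · exact le_refl _
      · exact h2.le
  have hvw' : ({v, w} : Finset (Fin N)).max' (by simp) = w := by
    apply le_antisymm
    · apply Finset.max'_le
      intro y hy
      simp only [Finset.mem_insert, Finset.mem_singleton] at hy
      rcases hy with rfl | rfl
      · exact h2.le
      · exact le_refl _
    · exact Finset.le_max' _ _ (by simp)
  rw [hvw, hvw']

def GoodG (g : ℕ → ℕ → Fin 2) (t M : ℕ) : Prop :=
  ¬ ∃ S : Finset ℕ, S ⊆ Finset.range M ∧ S.card = t ∧ ∃ c : Fin 2,
    (∀ x ∈ S, ∀ y ∈ S, x < y → g x y = c) ∨ (∀ x ∈ S, ∀ y ∈ S, y < x → g x y = c)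

lemma step_no_mono {M n t N : ℕ} (g : ℕ → ℕ → Fin 2) (hg : GoodG g t M)
    (ht : t ≤ n - 1) (hn : 3 ≤ n) (hN : N ≤ 2 ^ M) (c : Fin 4) :
    ¬ monoCliqueC 3 (stepChi (N := N) g) c n := by
  rintro ⟨S, hS, hmono⟩
  set W : ℕ → Fin N := fun i => ↑(S.orderIsoOfFin hS ⟨min i (n - 1), by omega⟩) with hWdef
  have hWmem : ∀ i, W i ∈ S := fun i => (S.orderIsoOfFin hS _).2
  have hWlt : ∀ i j, i < j → j < n → W i < W j := by
    intro i j hij hj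
    have : (⟨min i (n - 1), by omega⟩ : Fin n) < ⟨min j (n - 1), by omega⟩ := by
      rw [Fin.mk_lt_mk]; omega
    exact Subtype.coe_lt_coe.mpr ((S.orderIsoOfFin hS).strictMono this)
  set w : ℕ → ℕ := fun i => ((W i : Fin N) : ℕ) with hwdef
  have hwlt : ∀ i j, i < j → j < n → w i < w j := by
    intro i j hij hj; exact hWlt i j hij hj
  have hw2M : ∀ i, w i < 2 ^ M := fun i => lt_of_lt_of_le (W i).isLt hN
  have hkey : ∀ i j k, i < j → j < k → k < n → stepColor g (w i) (w j) (w k) = c := by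
    intro i j k hij hjk hk
    have h1 : W i < W j := hWlt i j hij (by omega)
    have h2 : W j < W k := hWlt j k hjk hk
    have hsub : ({W i, W j, W k} : Finset (Fin N)) ⊆ S := by
      intro x hx
      simp only [Finset.mem_insert, Finset.mem_singleton] at hx
      rcases hx with rfl | rfl | rfl <;> exact hWmem _
    have := hmono _ hsub (triple_card h1 h2)
    rwa [stepChi_triple g h1 h2] at this
  have hδM : ∀ i, i + 1 < n → DD (w i) (w (i + 1)) < M := fun i hi =>
    DD_lt (hw2M i) (hw2M (i + 1)) (Nat.ne_of_lt (hwlt i (i + 1) (by omega) hi))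
  by_cases ho : DD (w 0) (w 1) < DD (w 1) (w 2)
  · -- increasing case
    have hstep : ∀ i, i + 2 < n → DD (w i) (w (i + 1)) < DD (w (i + 1)) (w (i + 2)) := by
      intro i hi
      have h1 := hkey i (i + 1) (i + 2) (by omega) (by omega) hi
      have h2 := hkey 0 1 2 (by omega) (by omega) (by omega)
      exact (stepColor_inj (h1.trans h2.symm)).1.mpr ho
    have hδmono : ∀ j, j < n - 1 → ∀ i, i < j → DD (w i) (w (i + 1)) < DD (w j) (w (j + 1)) := by
      intro j
      induction j with
      | zero => omega
      | succ j ih =>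
        intro hj i hi
        rcases Nat.lt_succ_iff_lt_or_eq.mp hi with hij | rfl
        · exact (ih (by omega) i hij).trans (hstep j (by omega))
        · exact hstep i (by omega)
    have hDD : ∀ j, j < n → ∀ i, i < j → DD (w i) (w j) = DD (w (j - 1)) (w j) := by
      intro j
      induction j with
      | zero => omega
      | succ j ih =>
        intro hj i hi
        rcases Nat.lt_succ_iff_lt_or_eq.mp hi with hij | rfl
        · have h1 : w i < w j := hwlt i j hij (by omega)
          have h2 : w j < w (j + 1) := hwlt j (j + 1) (by omega) hj
          have hm := (DD_max h1 h2).2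
          rw [ih (by omega) i hij] at hm
          have hj1 : j ≥ 1 := by omega
          have hlt : DD (w (j - 1)) (w j) < DD (w j) (w (j + 1)) := by
            have := hδmono j (by omega) (j - 1) (by omega)
            rwa [show j - 1 + 1 = j by omega] at this
          rw [hm]
          simp only [Nat.add_sub_cancel]
          rw [max_eq_right hlt.le]
        · simp only [Nat.add_sub_cancel]
    have hgeq : ∀ p q, p < q → q < n - 1 →
        g (DD (w p) (w (p + 1))) (DD (w q) (w (q + 1))) = g (DD (w 0) (w 1)) (DD (w 1) (w 2)) := by
      intro p q hpq hq
      have h1 := hkey p (p + 1) (q + 1) (by omega) (by omega) (by omega)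
      have h2 := hkey 0 1 2 (by omega) (by omega) (by omega)
      have h3 := (stepColor_inj (h1.trans h2.symm)).2
      have h4 : DD (w (p + 1)) (w (q + 1)) = DD (w q) (w (q + 1)) := by
        have := hDD (q + 1) (by omega) (p + 1) (by omega)
        simpa using this
      rwa [h4] at h3
    set Δ : Finset ℕ := (Finset.range (n - 1)).image (fun i => DD (w i) (w (i + 1))) with hΔ
    have hΔcard : Δ.card = n - 1 := by
      rw [hΔ, Finset.card_image_of_injOn, Finset.card_range]
      intro x hx y hy hxy
      simp only [Finset.mem_coe, Finset.mem_range] at hx hy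
      by_contra hne
      rcases Nat.lt_or_ge x y with h | h
      · exact absurd hxy (Nat.ne_of_lt (hδmono y hy x h))
      · exact absurd hxy.symm (Nat.ne_of_lt (hδmono x hx y (by omega)))
    have hΔsub : Δ ⊆ Finset.range M := by
      intro x hx
      rw [hΔ, Finset.mem_image] at hx
      obtain ⟨i, hi, rfl⟩ := hx
      rw [Finset.mem_range] at hi ⊢
      exact hδM i (by omega)
    obtain ⟨T, hTsub, hTcard⟩ := Finset.exists_subset_card_eq (show t ≤ Δ.card by omega)
    apply hg
    refine ⟨T, hTsub.trans hΔsub, hTcard, g (DD (w 0) (w 1)) (DD (w 1) (w 2)), Or.inl ?_⟩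
    intro x hx y hy hxy
    have hx' := hTsub hx; have hy' := hTsub hy
    rw [hΔ, Finset.mem_image] at hx' hy'
    obtain ⟨p, hp, rfl⟩ := hx'
    obtain ⟨q, hq, rfl⟩ := hy'
    rw [Finset.mem_range] at hp hq
    have hpq : p < q := by
      by_contra h
      rcases Nat.lt_or_ge q p with h' | h'
      · exact absurd (hδmono p hp q h') (by omega)
      · have : p = q := by omega
        subst this; omega
    exact hgeq p q hpq hq
  · -- decreasing case
    have hstep : ∀ i, i + 2 < n → DD (w (i + 1)) (w (i + 2)) < DD (w i) (w (i + 1)) := by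
      intro i hi
      have h1 := hkey i (i + 1) (i + 2) (by omega) (by omega) hi
      have h2 := hkey 0 1 2 (by omega) (by omega) (by omega)
      have hiff := (stepColor_inj (h1.trans h2.symm)).1
      have hne := (DD_max (hwlt i (i + 1) (by omega) (by omega))
        (hwlt (i + 1) (i + 2) (by omega) hi)).1
      have : ¬ DD (w i) (w (i + 1)) < DD (w (i + 1)) (w (i + 2)) := fun h => ho (hiff.mp h)
      omega
    have hδanti : ∀ j, j < n - 1 → ∀ i, i < j → DD (w j) (w (j + 1)) < DD (w i) (w (i + 1)) := by
      intro j
      induction j with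
      | zero => omega
      | succ j ih =>
        intro hj i hi
        rcases Nat.lt_succ_iff_lt_or_eq.mp hi with hij | rfl
        · exact (hstep j (by omega)).trans (ih (by omega) i hij)
        · exact hstep i (by omega)
    have hDD : ∀ j, j < n → ∀ i, i < j → DD (w i) (w j) = DD (w i) (w (i + 1)) := by
      intro j
      induction j with
      | zero => omega
      | succ j ih =>
        intro hj i hi
        rcases Nat.lt_succ_iff_lt_or_eq.mp hi with hij | rfl
        · have h1 : w i < w j := hwlt i j hij (by omega)
          have h2 : w j < w (j + 1) := hwlt j (j + 1) (by omega) hj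
          have hm := (DD_max h1 h2).2
          rw [ih (by omega) i hij] at hm
          have hlt : DD (w j) (w (j + 1)) < DD (w i) (w (i + 1)) := hδanti j (by omega) i hij
          rw [hm, max_eq_left hlt.le]
        · rfl
    have hgeq : ∀ p q, p < q → q < n - 1 →
        g (DD (w p) (w (p + 1))) (DD (w q) (w (q + 1))) = g (DD (w 0) (w 1)) (DD (w 1) (w 2)) := by
      intro p q hpq hq
      have h1 := hkey p q (q + 1) hpq (by omega) (by omega)
      have h2 := hkey 0 1 2 (by omega) (by omega) (by omega)
      have h3 := (stepColor_inj (h1.trans h2.symm)).2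
      rwa [hDD q (by omega) p hpq] at h3
    set Δ : Finset ℕ := (Finset.range (n - 1)).image (fun i => DD (w i) (w (i + 1))) with hΔ
    have hΔcard : Δ.card = n - 1 := by
      rw [hΔ, Finset.card_image_of_injOn, Finset.card_range]
      intro x hx y hy hxy
      simp only [Finset.mem_coe, Finset.mem_range] at hx hy
      by_contra hne
      rcases Nat.lt_or_ge x y with h | h
      · exact absurd hxy.symm (Nat.ne_of_lt (hδanti y hy x h))
      · exact absurd hxy (Nat.ne_of_lt (hδanti x hx y (by omega)))
    have hΔsub : Δ ⊆ Finset.range M := by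
      intro x hx
      rw [hΔ, Finset.mem_image] at hx
      obtain ⟨i, hi, rfl⟩ := hx
      rw [Finset.mem_range] at hi ⊢
      exact hδM i (by omega)
    obtain ⟨T, hTsub, hTcard⟩ := Finset.exists_subset_card_eq (show t ≤ Δ.card by omega)
    apply hg
    refine ⟨T, hTsub.trans hΔsub, hTcard, g (DD (w 0) (w 1)) (DD (w 1) (w 2)), Or.inr ?_⟩
    intro x hx y hy hxy
    have hx' := hTsub hx; have hy' := hTsub hy
    rw [hΔ, Finset.mem_image] at hx' hy'
    obtain ⟨p, hp, rfl⟩ := hx'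
    obtain ⟨q, hq, rfl⟩ := hy'
    rw [Finset.mem_range] at hp hq
    have hpq : p < q := by
      by_contra h
      rcases Nat.lt_or_ge q p with h' | h'
      · exact absurd (hδanti p hp q h') (by omega)
      · have : p = q := by omega
        subst this; omega
    exact hgeq p q hpq hq

lemma count_prescribed {α β : Type*} [Fintype α] [DecidableEq α] [Fintype β] [DecidableEq β]
    (P : Finset α) (v : α → β) :
    (Finset.univ.filter (fun g : α → β => ∀ a ∈ P, g a = v a)).card
      * Fintype.card β ^ P.card ≤ Fintype.card β ^ Fintype.card α := by
  classical
  set A := Finset.univ.filter (fun g : α → β => ∀ a ∈ P, g a = v a) with hA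
  have key : Function.Injective (fun gh : ↥A × (↥P → β) =>
      fun a => if ha : a ∈ P then gh.2 ⟨a, ha⟩ else (gh.1 : α → β) a) := by
    rintro ⟨⟨g, hg⟩, h⟩ ⟨⟨g', hg'⟩, h'⟩ heq
    have heq' := congrFun heq
    rw [hA, Finset.mem_filter] at hg hg'
    have hh : h = h' := by
      funext a
      have := heq' a.1
      simp only [dif_pos a.2] at this
      exact this
    have hgg : g = g' := by
      funext a
      by_cases ha : a ∈ P
      · rw [hg.2 a ha, hg'.2 a ha]
      · have := heq' a
        simp only [dif_neg ha] at this
        exact this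
    simp [Prod.ext_iff, Subtype.ext_iff, hgg, hh]
  have hcard := Fintype.card_le_of_injective _ key
  rwa [Fintype.card_prod, Fintype.card_coe, Fintype.card_fun, Fintype.card_fun,
    Fintype.card_coe] at hcard

lemma card_ltPairs {α : Type*} [LinearOrder α] [DecidableEq α] (S : Finset α) :
    ((S ×ˢ S).filter (fun p => p.1 < p.2)).card = S.card.choose 2 := by
  rw [← Finset.card_powersetCard 2 S]
  apply Finset.card_bij (fun (p : α × α) _ => ({p.1, p.2} : Finset α))
  · intro p hp
    simp only [Finset.mem_filter, Finset.mem_product] at hp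
    rw [Finset.mem_powersetCard]
    constructor
    · intro x hx
      simp only [Finset.mem_insert, Finset.mem_singleton] at hx
      rcases hx with rfl | rfl
      exacts [hp.1.1, hp.1.2]
    · rw [Finset.card_insert_of_notMem (by simp [ne_of_lt hp.2]), Finset.card_singleton]
  · intro p hp q hq heq
    simp only [Finset.mem_filter, Finset.mem_product] at hp hq
    have h1 : p.1 ∈ ({q.1, q.2} : Finset α) := by rw [← heq]; simp
    have h2 : p.2 ∈ ({q.1, q.2} : Finset α) := by rw [← heq]; simp
    simp only [Finset.mem_insert, Finset.mem_singleton] at h1 h2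
    have hp2 := hp.2; have hq2 := hq.2
    rcases h1 with e1 | e1 <;> rcases h2 with e2 | e2
    · exact absurd (e1 ▸ e2 ▸ hp2) (lt_irrefl _)
    · exact Prod.ext e1 e2
    · exfalso; rw [e1, e2] at hp2; exact absurd hq2 (lt_asymm hp2)
    · exact absurd (e1 ▸ e2 ▸ hp2) (lt_irrefl _)
  · intro t ht
    rw [Finset.mem_powersetCard] at ht
    obtain ⟨a, b, hab, rfl⟩ := Finset.card_eq_two.mp ht.2
    rcases lt_or_gt_of_ne hab with h | h
    · refine ⟨(a, b), ?_, rfl⟩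
      simp only [Finset.mem_filter, Finset.mem_product]
      exact ⟨⟨ht.1 (by simp), ht.1 (by simp)⟩, h⟩
    · refine ⟨(b, a), ?_, by simp [Finset.pair_comm]⟩
      simp only [Finset.mem_filter, Finset.mem_product]
      exact ⟨⟨ht.1 (by simp), ht.1 (by simp)⟩, h⟩

lemma card_gtPairs {α : Type*} [LinearOrder α] [DecidableEq α] (S : Finset α) :
    ((S ×ˢ S).filter (fun p => p.2 < p.1)).card = S.card.choose 2 := by
  rw [← card_ltPairs S]
  apply Finset.card_bij (fun (p : α × α) _ => (p.2, p.1))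
  · intro p hp
    simp only [Finset.mem_filter, Finset.mem_product] at hp ⊢
    exact ⟨⟨hp.1.2, hp.1.1⟩, hp.2⟩
  · intro p hp q hq heq
    exact Prod.ext (congrArg Prod.snd heq) (congrArg Prod.fst heq)
  · intro b hb
    simp only [Finset.mem_filter, Finset.mem_product] at hb
    exact ⟨(b.2, b.1), by simp [Finset.mem_filter, Finset.mem_product, hb.1.1, hb.1.2, hb.2], rfl⟩

lemma exists_goodG (m : ℕ) (hm : 4 ≤ m) : ∃ g : ℕ → ℕ → Fin 2, GoodG g (4 * m) (2 ^ m) := by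
  classical
  set M := 2 ^ m with hM
  set t := 4 * m with ht
  set FF : Finset (Fin M) × Fin 2 → Finset (Fin M × Fin M → Fin 2) := fun Sc =>
    (Finset.univ.filter (fun g : Fin M × Fin M → Fin 2 =>
        ∀ p ∈ (Sc.1 ×ˢ Sc.1).filter (fun p => p.1 < p.2), g p = Sc.2)) ∪
      (Finset.univ.filter (fun g : Fin M × Fin M → Fin 2 =>
        ∀ p ∈ (Sc.1 ×ˢ Sc.1).filter (fun p => p.2 < p.1), g p = Sc.2)) with hFF
  set I := ((Finset.powersetCard t (Finset.univ : Finset (Fin M))) ×ˢ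
      (Finset.univ : Finset (Fin 2))) with hI
  set B := I.biUnion FF with hB
  have hcount : ∀ Sc : Finset (Fin M) × Fin 2, Sc.1.card = t →
      (FF Sc).card * 2 ^ (t.choose 2) ≤ 2 * 2 ^ (M * M) := by
    intro Sc hSc
    have h1 := count_prescribed ((Sc.1 ×ˢ Sc.1).filter (fun p => p.1 < p.2)) (fun _ => Sc.2)
    have h2 := count_prescribed ((Sc.1 ×ˢ Sc.1).filter (fun p => p.2 < p.1)) (fun _ => Sc.2)
    rw [card_ltPairs, hSc] at h1
    rw [card_gtPairs, hSc] at h2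
    simp only [Fintype.card_fin, Fintype.card_prod] at h1 h2
    calc (FF Sc).card * 2 ^ (t.choose 2)
        ≤ ((Finset.univ.filter (fun g : Fin M × Fin M → Fin 2 =>
            ∀ p ∈ (Sc.1 ×ˢ Sc.1).filter (fun p => p.1 < p.2), g p = Sc.2)).card
          + (Finset.univ.filter (fun g : Fin M × Fin M → Fin 2 =>
            ∀ p ∈ (Sc.1 ×ˢ Sc.1).filter (fun p => p.2 < p.1), g p = Sc.2)).card)
            * 2 ^ (t.choose 2) := by
          exact mul_le_mul_left (Finset.card_union_le _ _) _
      _ ≤ 2 * 2 ^ (M * M) := by rw [add_mul, two_mul]; exact Nat.add_le_add h1 h2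
  have hBbound : B.card * 2 ^ (t.choose 2) ≤ (M.choose t * 2) * (2 * 2 ^ (M * M)) := by
    calc B.card * 2 ^ (t.choose 2)
        ≤ (∑ Sc ∈ I, (FF Sc).card) * 2 ^ (t.choose 2) :=
          mul_le_mul_left Finset.card_biUnion_le _
      _ = ∑ Sc ∈ I, (FF Sc).card * 2 ^ (t.choose 2) :=
          Finset.sum_mul I (fun Sc => (FF Sc).card) (2 ^ (t.choose 2))
      _ ≤ ∑ _Sc ∈ I, 2 * 2 ^ (M * M) := by
          apply Finset.sum_le_sum
          intro Sc hSc
          apply hcount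
          rw [hI, Finset.mem_product] at hSc
          exact Finset.mem_powersetCard_univ.mp hSc.1
      _ = (M.choose t * 2) * (2 * 2 ^ (M * M)) := by
          rw [Finset.sum_const, hI, Finset.card_product, Finset.card_powersetCard,
            Finset.card_univ, Finset.card_univ, Fintype.card_fin, Fintype.card_fin, smul_eq_mul]
  have hBlt : B.card < 2 ^ (M * M) := by
    by_contra hge
    push_neg at hge
    have h1 : (2:ℕ) ^ (M * M) * 2 ^ (t.choose 2) ≤ (M.choose t * 2) * (2 * 2 ^ (M * M)) :=
      le_trans (mul_le_mul_left hge _) hBbound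
    have hchoose : M.choose t ≤ 2 ^ (m * t) := by
      calc M.choose t ≤ M ^ t := Nat.choose_le_pow M t
        _ = 2 ^ (m * t) := by rw [hM, ← pow_mul]
    have h2 : (2:ℕ) ^ (M * M) * 2 ^ (t.choose 2) ≤ 2 ^ (M * M) * 2 ^ (m * t + 2) := by
      calc (2:ℕ) ^ (M * M) * 2 ^ (t.choose 2) ≤ (M.choose t * 2) * (2 * 2 ^ (M * M)) := h1
        _ ≤ (2 ^ (m * t) * 2) * (2 * 2 ^ (M * M)) :=
            mul_le_mul_left (mul_le_mul_left hchoose _) _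
        _ = 2 ^ (M * M) * 2 ^ (m * t + 2) := by ring
    have h3 : t.choose 2 ≤ m * t + 2 := by
      have := Nat.le_of_mul_le_mul_left h2 (Nat.pow_pos (n := M * M) (by norm_num))
      exact (Nat.pow_le_pow_iff_right (by norm_num : 1 < 2)).mp this
    obtain ⟨s, hs⟩ : ∃ s, 4 * m = s + 1 := ⟨4 * m - 1, by omega⟩
    have h4 : t.choose 2 = 2 * m * s := by
      rw [ht, Nat.choose_two_right, hs, Nat.add_sub_cancel, ← hs]
      have : 4 * m * s = 2 * (2 * m * s) := by ring
      rw [this, Nat.mul_div_cancel_left _ (by norm_num)]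
    rw [h4, ht, hs] at h3
    have hs2 : 15 ≤ s := by omega
    nlinarith [hm, hs2]
  have hnotsub : ¬ (Finset.univ : Finset (Fin M × Fin M → Fin 2)) ⊆ B := by
    intro hsub
    have := Finset.card_le_card hsub
    simp only [Finset.card_univ, Fintype.card_fun, Fintype.card_prod, Fintype.card_fin] at this
    omega
  obtain ⟨g0, -, hg0B⟩ := Finset.not_subset.mp hnotsub
  refine ⟨fun x y => if hx : x < M then if hy : y < M then g0 (⟨x, hx⟩, ⟨y, hy⟩) else 0 else 0, ?_⟩
  rintro ⟨S, hsub, hcard, c, hc⟩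
  have hmem : ∀ x ∈ S, x < M := fun x hx => Finset.mem_range.mp (hsub hx)
  set S0 : Finset (Fin M) := S.attachFin hmem with hS0
  have hS0card : S0.card = t := by rw [hS0, Finset.card_attachFin, hcard]
  apply hg0B
  rw [hB, Finset.mem_biUnion]
  refine ⟨(S0, c), by rw [hI, Finset.mem_product]; exact ⟨Finset.mem_powersetCard_univ.mpr hS0card, Finset.mem_univ _⟩, ?_⟩
  rw [hFF, Finset.mem_union]
  rcases hc with h | h
  · left
    simp only [Finset.mem_filter, Finset.mem_univ, true_and]
    intro p hp
    simp only [Finset.mem_filter, Finset.mem_product, hS0, Finset.mem_attachFin] at hp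
    have := h p.1.1 hp.1.1 p.2.1 hp.1.2 hp.2
    dsimp only at this
    rw [dif_pos p.1.isLt, dif_pos p.2.isLt] at this
    simpa using this
  · right
    simp only [Finset.mem_filter, Finset.mem_univ, true_and]
    intro p hp
    simp only [Finset.mem_filter, Finset.mem_product, hS0, Finset.mem_attachFin] at hp
    have := h p.1.1 hp.1.1 p.2.1 hp.1.2 hp.2
    dsimp only at this
    rw [dif_pos p.1.isLt, dif_pos p.2.isLt] at this
    simpa using this

/-- bound for the greedy pair argument -/
def Hb : ℕ → ℕ
  | 0 => 0
  | s + 1 => 4 * Hb s + 1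

/-- bound for the greedy triple argument -/
def Gb (s r : ℕ) : ℕ :=
  match r with
  | 0 => 0
  | r + 1 => 4 ^ s * Gb (s + 1) r + 1

lemma getD_append_left {α} (l1 l2 : List α) (d : α) (i : ℕ) (h : i < l1.length) :
    (l1 ++ l2).getD i d = l1.getD i d := by
  simp [List.getD_eq_getElem?_getD, List.getElem?_append, h]

lemma getD_append_self {α} (l1 : List α) (v d : α) :
    (l1 ++ [v]).getD l1.length d = v := by
  simp [List.getD_eq_getElem?_getD, List.getElem?_append_right (le_refl l1.length)]

lemma getD_eq_get {α} (l : List α) (d : α) (i : ℕ) (h : i < l.length) :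
    l.getD i d = l.get ⟨i, h⟩ := by
  simp [List.getD_eq_getElem?_getD, List.getElem?_eq_getElem h]

lemma greedy2 (ψ : ℕ → ℕ → Fin 4) :
    ∀ (s : ℕ) (A : Finset ℕ), Hb s ≤ A.card →
    ∃ f : ℕ → ℕ, ∃ col : ℕ → Fin 4,
      (∀ i j, i < j → j < s → f i < f j) ∧ (∀ i, i < s → f i ∈ A) ∧
      (∀ i j, i < j → j < s → ψ (f i) (f j) = col i) := by
  intro s
  induction s with
  | zero => exact fun A _ => ⟨id, fun _ => 0, by omega, by omega, by omega⟩
  | succ s ih =>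
    intro A hA
    rw [show Hb (s+1) = 4 * Hb s + 1 from rfl] at hA
    have hne : A.Nonempty := Finset.card_pos.mp (by omega)
    set x := A.min' hne with hx
    set A' := A.erase x with hA'
    have hA'card : 4 * Hb s ≤ A'.card := by
      rw [hA', Finset.card_erase_of_mem (A.min'_mem hne)]; omega
    obtain ⟨c, -, hc⟩ := Finset.exists_le_card_fiber_of_mul_le_card_of_maps_to
      (s := A') (f := fun a => ψ x a) (t := (Finset.univ : Finset (Fin 4))) (n := Hb s)
      (fun a _ => Finset.mem_univ _) ⟨0, Finset.mem_univ _⟩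
      (by rw [Finset.card_univ, Fintype.card_fin]; omega)
    set B := A'.filter (fun a => ψ x a = c) with hB
    obtain ⟨f, col, hmono, hmem, hcol⟩ := ih B hc
    refine ⟨fun i => if i = 0 then x else f (i - 1), fun i => if i = 0 then c else col (i - 1),
      ?_, ?_, ?_⟩
    · intro i j hij hj
      dsimp only
      have hBsub : ∀ y ∈ B, y ∈ A' := fun y hy => Finset.mem_filter.mp hy |>.1
      have hj0 : ¬ j = 0 := by omega
      by_cases hi : i = 0
      · simp only [hi, hj0, eq_self_iff_true, if_true, if_false]
        have hmemB : f (j - 1) ∈ A' := hBsub _ (hmem (j - 1) (by omega))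
        rw [hA', Finset.mem_erase] at hmemB
        exact lt_of_le_of_ne (A.min'_le _ hmemB.2) (Ne.symm hmemB.1)
      · simp only [hi, hj0, if_false]
        exact hmono (i - 1) (j - 1) (by omega) (by omega)
    · intro i hi
      dsimp only
      by_cases h0 : i = 0
      · simp only [h0, eq_self_iff_true, if_true]; exact A.min'_mem hne
      · simp only [h0, if_false]
        have := hmem (i - 1) (by omega)
        have := Finset.mem_filter.mp this |>.1
        rw [hA', Finset.mem_erase] at this
        exact this.2
    · intro i j hij hj
      dsimp only
      have hj0 : ¬ j = 0 := by omega
      by_cases hi : i = 0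
      · simp only [hi, hj0, eq_self_iff_true, if_true, if_false]
        have := hmem (j - 1) (by omega)
        exact Finset.mem_filter.mp this |>.2
      · simp only [hi, hj0, if_false]
        exact hcol (i - 1) (j - 1) (by omega) (by omega)

lemma pairRamsey (ψ : ℕ → ℕ → Fin 4) (n : ℕ) (A : Finset ℕ) (hA : Hb (4 * n + 1) ≤ A.card) :
    ∃ J : Finset ℕ, J ⊆ A ∧ J.card = n ∧ ∃ c : Fin 4, ∀ x ∈ J, ∀ y ∈ J, x < y → ψ x y = c := by
  classical
  obtain ⟨f, col, hmono, hmem, hcol⟩ := greedy2 ψ (4 * n + 1) A hA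
  obtain ⟨c, -, hc⟩ := Finset.exists_lt_card_fiber_of_mul_lt_card_of_maps_to
    (s := Finset.range (4 * n + 1)) (f := col) (t := (Finset.univ : Finset (Fin 4))) (n := n)
    (fun a _ => Finset.mem_univ _)
    (by rw [Finset.card_univ, Fintype.card_fin, Finset.card_range]; omega)
  obtain ⟨I, hIsub, hIcard⟩ := Finset.exists_subset_card_eq (show n ≤ _ from hc.le)
  have hImem : ∀ i ∈ I, i < 4 * n + 1 ∧ col i = c := by
    intro i hi
    have := hIsub hi
    rw [Finset.mem_filter, Finset.mem_range] at this
    exact this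
  refine ⟨I.image f, ?_, ?_, c, ?_⟩
  · intro y hy
    obtain ⟨i, hi, rfl⟩ := Finset.mem_image.mp hy
    exact hmem i (hImem i hi).1
  · rw [Finset.card_image_of_injOn, hIcard]
    intro i hi j hj hij
    by_contra hne
    rcases Nat.lt_or_ge i j with h | h
    · exact absurd hij (Nat.ne_of_lt (hmono i j h (hImem j hj).1))
    · exact absurd hij.symm (Nat.ne_of_lt (hmono j i (by omega) (hImem i hi).1))
  · intro x hx y hy hxy
    obtain ⟨i, hi, rfl⟩ := Finset.mem_image.mp hx
    obtain ⟨j, hj, rfl⟩ := Finset.mem_image.mp hy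
    have hij : i < j := by
      by_contra h
      rcases Nat.lt_or_ge j i with h' | h'
      · exact absurd (hmono j i h' (hImem i hi).1) (by omega)
      · have : i = j := by omega
        subst this; omega
    rw [hcol i j hij (hImem j hj).1, (hImem i hi).2]

lemma greedy3 {N : ℕ} (χ : Finset (Fin N) → Fin 4) (d : Fin N) :
    ∀ (r : ℕ) (l : List (Fin N)) (V : Finset (Fin N)),
    Gb l.length r ≤ V.card →
    l.Nodup →
    (∀ v ∈ V, v ∉ l) →
    (∀ i j, i < j → j < l.length → ∀ x ∈ V, ∀ y ∈ V,
      χ {l.getD i d, l.getD j d, x} = χ {l.getD i d, l.getD j d, y}) →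
    (∀ i j k, i < j → j < k → k < l.length → ∀ x ∈ V,
      χ {l.getD i d, l.getD j d, l.getD k d} = χ {l.getD i d, l.getD j d, x}) →
    (∀ i j k k', i < j → j < k → k < k' → k' < l.length →
      χ {l.getD i d, l.getD j d, l.getD k d} = χ {l.getD i d, l.getD j d, l.getD k' d}) →
    ∃ L : List (Fin N), L.length = l.length + r ∧ l <+: L ∧ L.Nodup ∧
      (∀ i j k k', i < j → j < k → k < k' → k' < L.length →
        χ {L.getD i d, L.getD j d, L.getD k d} = χ {L.getD i d, L.getD j d, L.getD k' d}) := by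
  intro r
  induction r with
  | zero =>
    intro l V _ h1 _ _ _ h5
    exact ⟨l, by omega, List.prefix_refl l, h1, h5⟩
  | succ r ih =>
    intro l V hcard h1 h2 h3 h4 h5
    classical
    set s := l.length with hs
    rw [show Gb s (r + 1) = 4 ^ s * Gb (s + 1) r + 1 from rfl] at hcard
    have hne : V.Nonempty := Finset.card_pos.mp (by omega)
    set v := V.min' hne with hv
    have hvV : v ∈ V := V.min'_mem hne
    set V1 := V.erase v with hV1
    have hV1card : 4 ^ s * Gb (s + 1) r ≤ V1.card := by
      rw [hV1, Finset.card_erase_of_mem hvV]; omega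
    obtain ⟨tup0, -, htup⟩ := Finset.exists_le_card_fiber_of_mul_le_card_of_maps_to
      (s := V1) (f := fun y => (fun i : Fin s => χ {l.getD i.1 d, v, y}))
      (t := (Finset.univ : Finset (Fin s → Fin 4))) (n := Gb (s + 1) r)
      (fun a _ => Finset.mem_univ _) ⟨fun _ => 0, Finset.mem_univ _⟩
      (by rw [Finset.card_univ, Fintype.card_fun, Fintype.card_fin, Fintype.card_fin]; omega)
    set B := V1.filter (fun y => (fun i : Fin s => χ {l.getD i.1 d, v, y}) = tup0) with hB
    have hBsub : ∀ y ∈ B, y ∈ V ∧ y ≠ v ∧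
        ∀ i : Fin s, χ {l.getD i.1 d, v, y} = tup0 i := by
      intro y hy
      rw [hB, Finset.mem_filter, hV1, Finset.mem_erase] at hy
      exact ⟨hy.1.2, hy.1.1, fun i => congrFun hy.2 i⟩
    have hu1 : ∀ i, i < s → (l ++ [v]).getD i d = l.getD i d := fun i hi =>
      getD_append_left l [v] d i hi
    have hu2 : (l ++ [v]).getD s d = v := getD_append_self l v d
    have hlen : (l ++ [v]).length = s + 1 := by simp [hs]
    obtain ⟨L, hL1, hL2, hL3, hL4⟩ := ih (l ++ [v]) B
      (by rw [hlen]; exact htup)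
      (by
        rw [List.nodup_append]
        exact ⟨h1, List.nodup_singleton v, fun a ha b hb hab => by
          rw [List.mem_singleton] at hb
          subst hb; subst hab
          exact h2 _ hvV ha⟩)
      (by
        intro y hy
        obtain ⟨hyV, hyne, -⟩ := hBsub y hy
        rw [List.mem_append, List.mem_singleton]
        push_neg
        exact ⟨h2 y hyV, hyne⟩)
      (by
        intro i j hij hj x hx y hy
        rw [hlen] at hj
        obtain ⟨hxV, -, htx⟩ := hBsub x hx
        obtain ⟨hyV, -, hty⟩ := hBsub y hy
        rcases Nat.lt_or_ge j s with hjs | hjs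
        · rw [hu1 i (by omega), hu1 j hjs]
          exact h3 i j hij hjs x hxV y hyV
        · have hj' : j = s := by omega
          subst hj'
          rw [hu1 i (by omega), hu2]
          exact (htx ⟨i, by omega⟩).trans (hty ⟨i, by omega⟩).symm)
      (by
        intro i j k hij hjk hk x hx
        rw [hlen] at hk
        obtain ⟨hxV, -, -⟩ := hBsub x hx
        rcases Nat.lt_or_ge k s with hks | hks
        · rw [hu1 i (by omega), hu1 j (by omega), hu1 k hks]
          exact h4 i j k hij hjk hks x hxV
        · have hk' : k = s := by omega
          subst hk'
          rw [hu1 i (by omega), hu1 j (by omega), hu2]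
          exact h3 i j hij (by omega) v hvV x hxV)
      (by
        intro i j k k' hij hjk hkk' hk'
        rw [hlen] at hk'
        rcases Nat.lt_or_ge k' s with hk's | hk's
        · rw [hu1 i (by omega), hu1 j (by omega), hu1 k (by omega), hu1 k' hk's]
          exact h5 i j k k' hij hjk hkk' hk's
        · have hk'' : k' = s := by omega
          subst hk''
          rw [hu1 i (by omega), hu1 j (by omega), hu1 k (by omega), hu2]
          exact h4 i j k hij hjk (by omega) v hvV)
    refine ⟨L, by rw [hL1, hlen]; omega, (l.prefix_append [v]).trans hL2, hL3, hL4⟩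

lemma sort3 (s : Finset ℕ) (h : s.card = 3) : ∃ i j k, i < j ∧ j < k ∧ s = {i, j, k} := by
  obtain ⟨a, b, c, hab, hac, hbc, rfl⟩ := Finset.card_eq_three.mp h
  have habc : a ≠ b ∧ a ≠ c ∧ b ≠ c := ⟨hab, hac, hbc⟩
  rcases Nat.lt_trichotomy a b with h1 | h1 | h1 <;>
    rcases Nat.lt_trichotomy b c with h2 | h2 | h2 <;>
      rcases Nat.lt_trichotomy a c with h3 | h3 | h3 <;>
        first
          | omega
          | exact ⟨a, b, c, by omega, by omega, rfl⟩
          | exact ⟨a, c, b, by omega, by omega, by ext x; simp; tauto⟩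
          | exact ⟨b, a, c, by omega, by omega, by ext x; simp; tauto⟩
          | exact ⟨b, c, a, by omega, by omega, by ext x; simp; tauto⟩
          | exact ⟨c, a, b, by omega, by omega, by ext x; simp; tauto⟩
          | exact ⟨c, b, a, by omega, by omega, by ext x; simp; tauto⟩

lemma ramsey_four (n N : ℕ) (hN : Gb 0 (Hb (4 * n + 1)) ≤ N) (χ : Finset (Fin N) → Fin 4) :
    ∃ c : Fin 4, monoCliqueC 3 χ c n := by
  classical
  set T := Hb (4 * n + 1) with hT
  have hT1 : 1 ≤ T := by rw [hT, show Hb (4 * n + 1) = 4 * Hb (4 * n) + 1 from rfl]; omega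
  have hNpos : 0 < N := by
    obtain ⟨T', hT'⟩ : ∃ T', T = T' + 1 := ⟨T - 1, by omega⟩
    rw [hT'] at hN
    rw [show Gb 0 (T' + 1) = 4 ^ 0 * Gb 1 T' + 1 from rfl] at hN
    omega
  set d : Fin N := ⟨0, hNpos⟩ with hd
  obtain ⟨L, hLlen, -, hLnodup, h5⟩ := greedy3 χ d T [] Finset.univ
    (by rw [Finset.card_univ, Fintype.card_fin]; simpa using hN)
    List.nodup_nil (by simp) (by intro i j _ hj; simp at hj) (by intro i j k _ _ hk; simp at hk)
    (by intro i j k k' _ _ _ hk'; simp at hk')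
  rw [List.length_nil, Nat.zero_add] at hLlen
  set u : ℕ → Fin N := fun i => L.getD i d with hu
  have huinj : ∀ i j, i < T → j < T → u i = u j → i = j := by
    intro i j hi hj hij
    rw [hu] at hij
    simp only at hij
    rw [getD_eq_get L d i (by omega), getD_eq_get L d j (by omega)] at hij
    have := List.nodup_iff_injective_get.mp hLnodup hij
    exact congrArg Fin.val this
  set ψ : ℕ → ℕ → Fin 4 := fun i j => χ {u i, u j, u (j + 1)} with hψ
  obtain ⟨J, hJsub, hJcard, c, hJmono⟩ := pairRamsey ψ n (Finset.range T)
    (by rw [Finset.card_range])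
  have hJT : ∀ i ∈ J, i < T := fun i hi => Finset.mem_range.mp (hJsub hi)
  refine ⟨c, J.image u, ?_, ?_⟩
  · rw [Finset.card_image_of_injOn, hJcard]
    intro i hi j hj hij
    exact huinj i j (hJT _ hi) (hJT _ hj) hij
  · intro e he hecard
    obtain ⟨a, b, c', hab, hac, hbc, rfl⟩ := Finset.card_eq_three.mp hecard
    obtain ⟨ia, hia, hua⟩ := Finset.mem_image.mp (he (by simp : a ∈ ({a, b, c'} : Finset _)))
    obtain ⟨ib, hib, hub⟩ := Finset.mem_image.mp (he (by simp : b ∈ ({a, b, c'} : Finset _)))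
    obtain ⟨ic, hic, huc⟩ := Finset.mem_image.mp (he (by simp : c' ∈ ({a, b, c'} : Finset _)))
    have hine1 : ia ≠ ib := fun h => hab (by rw [← hua, ← hub, h])
    have hine2 : ia ≠ ic := fun h => hac (by rw [← hua, ← huc, h])
    have hine3 : ib ≠ ic := fun h => hbc (by rw [← hub, ← huc, h])
    have hs0card : ({ia, ib, ic} : Finset ℕ).card = 3 :=
      Finset.card_eq_three.mpr ⟨ia, ib, ic, hine1, hine2, hine3, rfl⟩
    obtain ⟨i, j, k, hij, hjk, hset⟩ := sort3 _ hs0card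
    have hsub0 : ({i, j, k} : Finset ℕ) ⊆ J := by
      rw [← hset]
      intro x hx
      simp only [Finset.mem_insert, Finset.mem_singleton] at hx
      rcases hx with rfl | rfl | rfl <;> assumption
    have hiJ : i ∈ J := hsub0 (by simp)
    have hjJ : j ∈ J := hsub0 (by simp)
    have hkJ : k ∈ J := hsub0 (by simp)
    have himage : ({a, b, c'} : Finset (Fin N)) = {u i, u j, u k} := by
      have h1 : ({a, b, c'} : Finset (Fin N)) = ({ia, ib, ic} : Finset ℕ).image u := by
        rw [Finset.image_insert, Finset.image_insert, Finset.image_singleton, hua, hub, huc]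
      rw [h1, hset, Finset.image_insert, Finset.image_insert, Finset.image_singleton]
    rw [himage]
    have hχψ : χ {u i, u j, u k} = ψ i j := by
      rw [hψ]
      simp only
      by_cases hkj : k = j + 1
      · rw [hkj]
      · have := h5 i j (j + 1) k hij (by omega) (by omega) (by rw [hLlen]; exact hJT _ hkJ)
        exact this.symm
    rw [hχψ]
    exact hJmono i hiJ j hjJ hij


theorem stmt_11 :
    ∃ c : ℝ, 0 < c ∧ ∀ᶠ n : ℕ in atTop,
      (2:ℝ) ^ ((2:ℝ) ^ (c * n)) < (ramseyMulti 3 n 4 : ℝ) := by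
  refine ⟨1/8, by norm_num, ?_⟩
  rw [Filter.eventually_atTop]
  refine ⟨17, fun n hn => ?_⟩
  set m := (n - 1) / 4 with hm
  have hm4 : 4 ≤ m := by omega
  have hmn : 4 * m ≤ n - 1 := by omega
  have h8m : n ≤ 8 * m := by omega
  obtain ⟨g, hg⟩ := exists_goodG m hm4
  have hlow : ∀ N', (∀ χ : Finset (Fin N') → Fin 4, ∃ c, monoCliqueC 3 χ c n) →
      2 ^ (2 ^ m) < N' := by
    intro N' hN'
    by_contra hle
    push_neg at hle
    obtain ⟨c, hc⟩ := hN' (stepChi g)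
    exact step_no_mono g hg hmn (by omega) hle c hc
  have hnonempty : {N | ∀ χ : Finset (Fin N) → Fin 4, ∃ c : Fin 4, monoCliqueC 3 χ c n}.Nonempty :=
    ⟨Gb 0 (Hb (4 * n + 1)), fun χ => ramsey_four n _ (le_refl _) χ⟩
  have hgt : 2 ^ (2 ^ m) < ramseyMulti 3 n 4 := by
    rw [ramseyMulti]
    exact hlow _ (Nat.sInf_mem hnonempty)
  have hcast : ((2 ^ (2 ^ m) : ℕ) : ℝ) < (ramseyMulti 3 n 4 : ℝ) := by exact_mod_cast hgt
  refine lt_of_le_of_lt ?_ hcast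
  have h2 : ((2 ^ m : ℕ) : ℝ) = (2:ℝ) ^ ((m : ℕ) : ℝ) := by
    push_cast
    rw [Real.rpow_natCast]
  have h1 : ((2 ^ (2 ^ m) : ℕ) : ℝ) = (2:ℝ) ^ ((2:ℝ) ^ ((m : ℕ) : ℝ)) := by
    push_cast
    rw [← h2, Real.rpow_natCast]
  rw [h1]
  rw [Real.rpow_le_rpow_left_iff (by norm_num : (1:ℝ) < 2)]
  rw [Real.rpow_le_rpow_left_iff (by norm_num : (1:ℝ) < 2)]
  have : (n : ℝ) ≤ 8 * (m : ℝ) := by exact_mod_cast h8m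
  linarith
end
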